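/- arXiv:1502.02159 — 2 statements merged into one kernel-verified Lean document; each statement's English description precedes it below -/
import Mathlib

section
/- Suppose H is a finite set of connected graphs such that, for some n₀, every 2-connected H-free graph of order at least n₀ has a dominating cycle. Then H contains a graph T that is a tree with maximum degree at most 3 and at most one vertex of degree 3. -/
open SimpleGraph

def IsCycleEmb {V : Type*} (G : SimpleGraph V) (n : ℕ) (f : ZMod n → V) : Prop :=
  3 ≤ n ∧ Function.Injective f ∧ ∀ i : ZMod n, G.Adj (f i) (f (i + 1))

def IsLongestCycle {V : Type*} (G : SimpleGraph V) (n : ℕ) (f : ZMod n → V) : Prop :=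
  IsCycleEmb G n f ∧ ∀ (m : ℕ) (g : ZMod m → V), IsCycleEmb G m g → m ≤ n

def IsDominatingCycle {V : Type*} (G : SimpleGraph V) (n : ℕ) (f : ZMod n → V) : Prop :=
  IsCycleEmb G n f ∧ ∀ a b : V, G.Adj a b → a ∈ Set.range f ∨ b ∈ Set.range f

def IsCompOutside {V : Type*} (G : SimpleGraph V) (C : Set V) (H : Set V) : Prop :=
  H.Nonempty ∧ Disjoint H C ∧ (G.induce H).Connected ∧
    ∀ a ∈ H, ∀ b : V, G.Adj a b → b ∉ C → b ∈ H

def TwoConnected {V : Type*} (G : SimpleGraph V) : Prop :=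
  3 ≤ Nat.card V ∧ ∀ v : V, (G.induce ({v}ᶜ : Set V)).Connected

def KConnected {V : Type*} (G : SimpleGraph V) (k : ℕ) : Prop :=
  k < Nat.card V ∧ ∀ S : Set V, S.ncard < k → (G.induce (Sᶜ : Set V)).Connected

def HFree {W V : Type*} (H : SimpleGraph W) (G : SimpleGraph V) : Prop :=
  ¬ Nonempty (H ↪g G)

def IsCompleteMultipartite {V : Type*} (G : SimpleGraph V) : Prop :=
  ∃ s : Setoid V, ∀ a b : V, G.Adj a b ↔ ¬ s.r a b

/-- `W = K₁ + 3K₂`: vertex 0 joined to three disjoint edges 12, 34, 56. -/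
def Wgraph : SimpleGraph (Fin 7) :=
  SimpleGraph.fromRel (fun a b =>
    a = 0 ∨ (a = 1 ∧ b = 2) ∨ (a = 3 ∧ b = 4) ∨ (a = 5 ∧ b = 6))

/-- `Z₁`, the paw: triangle 012 plus pendant edge 23. -/
def pawGraph : SimpleGraph (Fin 4) :=
  SimpleGraph.fromRel (fun a b =>
    (a = 0 ∧ b = 1) ∨ (a = 1 ∧ b = 2) ∨ (a = 0 ∧ b = 2) ∨ (a = 2 ∧ b = 3))

/-- The claw `K₁,₃`. -/
def clawGraph : SimpleGraph (Fin 4) :=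
  SimpleGraph.fromRel (fun a _ => a = 0)

/-- `K₄` minus the edge 23. -/
def K4minusGraph : SimpleGraph (Fin 4) :=
  SimpleGraph.fromRel (fun a b => ¬((a = 2 ∧ b = 3) ∨ (a = 3 ∧ b = 2)))

/-- `K₁,₃**`: spider with legs of lengths 2, 2, 1 (center 0, legs 0-1-2, 0-3-4, 0-5). -/
def spider221 : SimpleGraph (Fin 6) :=
  SimpleGraph.fromRel (fun a b =>
    (a = 0 ∧ b = 1) ∨ (a = 1 ∧ b = 2) ∨ (a = 0 ∧ b = 3) ∨ (a = 3 ∧ b = 4) ∨ (a = 0 ∧ b = 5))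

/-- The theta graph `A_s`: two vertices joined by three internally disjoint paths,
each with `s` internal vertices. -/
def thetaGraph (s : ℕ) : SimpleGraph (Fin 2 ⊕ Fin 3 × Fin s) :=
  SimpleGraph.fromRel (fun a b =>
    (∃ (j : Fin 3) (k : Fin s), a = Sum.inl 0 ∧ b = Sum.inr (j, k) ∧ (k : ℕ) = 0) ∨
    (∃ (j : Fin 3) (k : Fin s), a = Sum.inl 1 ∧ b = Sum.inr (j, k) ∧ (k : ℕ) = s - 1) ∨
    (∃ (j : Fin 3) (k l : Fin s), a = Sum.inr (j, k) ∧ b = Sum.inr (j, l) ∧ (l : ℕ) = (k : ℕ) + 1))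

/-- `A′_s = 2K₁ + sK₂`. -/
def APrime (s : ℕ) : SimpleGraph (Fin 2 ⊕ Fin s × Fin 2) :=
  SimpleGraph.fromRel (fun a b =>
    (∃ (i : Fin 2) (x : Fin s × Fin 2), a = Sum.inl i ∧ b = Sum.inr x) ∨
    (∃ j : Fin s, a = Sum.inr (j, 0) ∧ b = Sum.inr (j, 1)))

/-- `A″_s = K₂ + (2K₂ ∪ K_s)`. -/
def ADoublePrime (s : ℕ) : SimpleGraph (Fin 2 ⊕ (Fin 2 × Fin 2 ⊕ Fin s)) :=
  SimpleGraph.fromRel (fun a b =>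
    (∃ i : Fin 2, a = Sum.inl i) ∨
    (∃ j : Fin 2, a = Sum.inr (Sum.inl (j, 0)) ∧ b = Sum.inr (Sum.inl (j, 1))) ∨
    (∃ p q : Fin s, a = Sum.inr (Sum.inr p) ∧ b = Sum.inr (Sum.inr q)))

/-- `A_s⁽¹⁾`: two disjoint triangles joined by three vertex-disjoint paths with `s`
internal vertices each. -/
def AOne (s : ℕ) : SimpleGraph (Fin 2 × Fin 3 ⊕ Fin 3 × Fin s) :=
  SimpleGraph.fromRel (fun a b =>
    (∃ (t : Fin 2) (i j : Fin 3), a = Sum.inl (t, i) ∧ b = Sum.inl (t, j)) ∨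
    (∃ (j : Fin 3) (k : Fin s), a = Sum.inl (0, j) ∧ b = Sum.inr (j, k) ∧ (k : ℕ) = 0) ∨
    (∃ (j : Fin 3) (k : Fin s), a = Sum.inl (1, j) ∧ b = Sum.inr (j, k) ∧ (k : ℕ) = s - 1) ∨
    (∃ (j : Fin 3) (k l : Fin s), a = Sum.inr (j, k) ∧ b = Sum.inr (j, l) ∧ (l : ℕ) = (k : ℕ) + 1))

/-- `A_s⁽⁵⁾`: vertices `x₁, x₂` and `y_{i,j}`; edges `x₁x₂`, `y_{1,j}y_{2,j}`, `x_i y_{i,j}`. -/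
def AFive (s : ℕ) : SimpleGraph (Fin 2 ⊕ Fin 2 × Fin s) :=
  SimpleGraph.fromRel (fun a b =>
    (a = Sum.inl 0 ∧ b = Sum.inl 1) ∨
    (∃ j : Fin s, a = Sum.inr (0, j) ∧ b = Sum.inr (1, j)) ∨
    (∃ (i : Fin 2) (j : Fin s), a = Sum.inl i ∧ b = Sum.inr (i, j)))

namespace Stmt16Aux


abbrev TV (s : ℕ) := Fin 2 ⊕ Fin 3 × Fin s

lemma theta_adj_cases {s : ℕ} {a b : TV s} (h : (thetaGraph s).Adj a b) :
    (∃ j k, a = Sum.inl 0 ∧ b = Sum.inr (j,k) ∧ (k:ℕ) = 0) ∨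
    (∃ j k, b = Sum.inl 0 ∧ a = Sum.inr (j,k) ∧ (k:ℕ) = 0) ∨
    (∃ j k, a = Sum.inl 1 ∧ b = Sum.inr (j,k) ∧ (k:ℕ) = s-1) ∨
    (∃ j k, b = Sum.inl 1 ∧ a = Sum.inr (j,k) ∧ (k:ℕ) = s-1) ∨
    (∃ j k l, a = Sum.inr (j,k) ∧ b = Sum.inr (j,l) ∧ ((l:ℕ) = (k:ℕ)+1 ∨ (k:ℕ) = (l:ℕ)+1)) := by
  rw [thetaGraph, fromRel_adj] at h
  obtain ⟨-, h | h⟩ := h <;>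
    rcases h with ⟨j, k, h1, h2, h3⟩ | ⟨j, k, h1, h2, h3⟩ | ⟨j, k, l, h1, h2, h3⟩
  · exact Or.inl ⟨j, k, h1, h2, h3⟩
  · exact Or.inr (Or.inr (Or.inl ⟨j, k, h1, h2, h3⟩))
  · exact Or.inr (Or.inr (Or.inr (Or.inr ⟨j, k, l, h1, h2, Or.inl h3⟩)))
  · exact Or.inr (Or.inl ⟨j, k, h1, h2, h3⟩)
  · exact Or.inr (Or.inr (Or.inr (Or.inl ⟨j, k, h1, h2, h3⟩)))
  · exact Or.inr (Or.inr (Or.inr (Or.inr ⟨j, l, k, h2, h1, Or.inr h3⟩)))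

lemma theta_adj_inl0 {s : ℕ} (j : Fin 3) (hs : 0 < s) :
    (thetaGraph s).Adj (Sum.inl 0) (Sum.inr (j, ⟨0, hs⟩)) := by
  rw [thetaGraph, fromRel_adj]
  exact ⟨by simp, Or.inl (Or.inl ⟨j, ⟨0, hs⟩, rfl, rfl, rfl⟩)⟩

lemma theta_adj_inl1 {s : ℕ} (j : Fin 3) (hs : 0 < s) :
    (thetaGraph s).Adj (Sum.inl 1) (Sum.inr (j, ⟨s-1, by omega⟩)) := by
  rw [thetaGraph, fromRel_adj]
  exact ⟨by simp, Or.inl (Or.inr (Or.inl ⟨j, ⟨s-1, by omega⟩, rfl, rfl, rfl⟩))⟩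

lemma theta_adj_succ {s : ℕ} (j : Fin 3) (k : ℕ) (hk : k + 1 < s) :
    (thetaGraph s).Adj (Sum.inr (j, ⟨k, by omega⟩)) (Sum.inr (j, ⟨k+1, hk⟩)) := by
  rw [thetaGraph, fromRel_adj]
  refine ⟨by simp, Or.inl (Or.inr (Or.inr ⟨j, ⟨k, by omega⟩, ⟨k+1, hk⟩, rfl, rfl, rfl⟩))⟩


/-- grading -/
def phi (s : ℕ) : TV s → ℤ
  | Sum.inl a => if a = 0 then 0 else (s : ℤ) + 1
  | Sum.inr (_, k) => (k : ℤ) + 1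

@[simp] lemma phi_inl0 {s : ℕ} : phi s (Sum.inl 0) = 0 := by simp [phi]
@[simp] lemma phi_inl1 {s : ℕ} : phi s (Sum.inl 1) = (s:ℤ)+1 := by
  rw [phi]; exact if_neg (by decide)
@[simp] lemma phi_inr {s : ℕ} (j : Fin 3) (k : Fin s) :
    phi s (Sum.inr (j,k)) = ((k:ℕ):ℤ)+1 := rfl

lemma theta_nbr_inl0 {s : ℕ} {b : TV s} (h : (thetaGraph s).Adj (Sum.inl 0) b) :
    ∃ j k, b = Sum.inr (j,k) ∧ (k:ℕ) = 0 := by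
  rcases theta_adj_cases h with ⟨j,k,h1,h2,h3⟩ | ⟨j,k,h1,h2,h3⟩ | ⟨j,k,h1,h2,h3⟩ |
    ⟨j,k,h1,h2,h3⟩ | ⟨j,k,l,h1,h2,h3⟩
  · exact ⟨j, k, h2, h3⟩
  all_goals simp_all

lemma theta_nbr_inl1 {s : ℕ} {b : TV s} (h : (thetaGraph s).Adj (Sum.inl 1) b) :
    ∃ j k, b = Sum.inr (j,k) ∧ (k:ℕ) = s - 1 := by
  rcases theta_adj_cases h with ⟨j,k,h1,h2,h3⟩ | ⟨j,k,h1,h2,h3⟩ | ⟨j,k,h1,h2,h3⟩ |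
    ⟨j,k,h1,h2,h3⟩ | ⟨j,k,l,h1,h2,h3⟩
  · simp_all
  · simp_all
  · exact ⟨j, k, h2, h3⟩
  all_goals simp_all

lemma theta_nbr_inr {s : ℕ} {j : Fin 3} {k : Fin s} {b : TV s}
    (h : (thetaGraph s).Adj (Sum.inr (j,k)) b) :
    (b = Sum.inl 0 ∧ (k:ℕ) = 0) ∨ (b = Sum.inl 1 ∧ (k:ℕ) = s-1) ∨
    (∃ l : Fin s, b = Sum.inr (j,l) ∧ ((l:ℕ) = (k:ℕ)+1 ∨ (k:ℕ) = (l:ℕ)+1)) := by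
  rcases theta_adj_cases h with ⟨j',k',h1,h2,h3⟩ | ⟨j',k',h1,h2,h3⟩ | ⟨j',k',h1,h2,h3⟩ |
    ⟨j',k',h1,h2,h3⟩ | ⟨j',k',l',h1,h2,h3⟩
  · simp_all
  · obtain ⟨rfl, rfl⟩ : j' = j ∧ k' = k := by
      simpa [eq_comm, and_comm] using h2
    exact Or.inl ⟨h1, h3⟩
  · simp_all
  · obtain ⟨rfl, rfl⟩ : j' = j ∧ k' = k := by
      simpa [eq_comm, and_comm] using h2
    exact Or.inr (Or.inl ⟨h1, h3⟩)
  · obtain ⟨rfl, rfl⟩ : j' = j ∧ k' = k := by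
      simpa [eq_comm, and_comm] using h1
    exact Or.inr (Or.inr ⟨l', h2, h3⟩)

/-- down-neighbor -/
def dn {s : ℕ} (j : Fin 3) (k : Fin s) : TV s :=
  if h : (k:ℕ) = 0 then Sum.inl 0 else Sum.inr (j, ⟨(k:ℕ)-1, by have := k.isLt; omega⟩)

/-- up-neighbor -/
def up {s : ℕ} (j : Fin 3) (k : Fin s) : TV s :=
  if h : (k:ℕ) = s - 1 then Sum.inl 1 else Sum.inr (j, ⟨(k:ℕ)+1, by have := k.isLt; omega⟩)

lemma theta_nbr_pair {s : ℕ} {j : Fin 3} {k : Fin s} {b : TV s}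
    (h : (thetaGraph s).Adj (Sum.inr (j,k)) b) : b = dn j k ∨ b = up j k := by
  have hks := k.isLt
  rcases theta_nbr_inr h with ⟨rfl, h0⟩ | ⟨rfl, h0⟩ | ⟨l, rfl, hl | hl⟩
  · exact Or.inl (by rw [dn, dif_pos h0])
  · exact Or.inr (by rw [up, dif_pos h0])
  · refine Or.inr ?_
    have hls := l.isLt
    rw [up, dif_neg (by omega)]
    simp only [Sum.inr.injEq, Prod.mk.injEq, true_and]
    exact Fin.ext (by simp only [Fin.val_mk]; omega)
  · refine Or.inl ?_
    have hls := l.isLt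
    rw [dn, dif_neg (by omega)]
    simp only [Sum.inr.injEq, Prod.mk.injEq, true_and]
    exact Fin.ext (by simp only [Fin.val_mk]; omega)

lemma phi_dn {s : ℕ} (j : Fin 3) (k : Fin s) : phi s (dn j k) = phi s (Sum.inr (j,k)) - 1 := by
  have hks := k.isLt
  rw [dn]
  split_ifs with h
  · simp [h]
  · simp only [phi_inr, Fin.val_mk]
    omega

lemma phi_up {s : ℕ} (j : Fin 3) (k : Fin s) : phi s (up j k) = phi s (Sum.inr (j,k)) + 1 := by
  have hks := k.isLt
  rw [up]
  split_ifs with h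
  · simp only [phi_inl1, phi_inr]
    omega
  · simp only [phi_inr, Fin.val_mk]
    omega

lemma phi_adj {s : ℕ} {a b : TV s} (h : (thetaGraph s).Adj a b) :
    |phi s a - phi s b| ≤ 1 := by
  rcases theta_adj_cases h with ⟨j,k,rfl,rfl,h3⟩ | ⟨j,k,rfl,rfl,h3⟩ | ⟨j,k,rfl,rfl,h3⟩ |
    ⟨j,k,rfl,rfl,h3⟩ | ⟨j,k,l,rfl,rfl,h3⟩ <;>
    [skip; skip; (have := k.isLt); (have := k.isLt); (have := k.isLt; have := l.isLt)] <;>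
    simp only [phi_inl0, phi_inl1, phi_inr] <;> rw [abs_le] <;> constructor <;> omega

lemma walk_phi {α : Type*} {G : SimpleGraph α} (φ : α → ℤ)
    (hφ : ∀ a b, G.Adj a b → |φ a - φ b| ≤ 1) {u v : α} (w : G.Walk u v) :
    |φ u - φ v| ≤ w.length := by
  induction w with
  | nil => simp
  | cons h p ih =>
    rename_i a b c
    have := hφ a b h
    rw [SimpleGraph.Walk.length_cons]
    push_cast
    have habs := abs_sub_le (φ a) (φ b) (φ c)
    omega


section CycleMachinery

variable {α : Type*} {G : SimpleGraph α}

lemma support_eq_map {u v : α} (p : G.Walk u v) :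
    p.support = (List.range (p.length+1)).map p.getVert := by
  induction p with
  | nil => simp [SimpleGraph.Walk.getVert]
  | cons h q ih =>
    rw [Walk.support_cons, Walk.length_cons, List.range_succ_eq_map, List.map_cons,
      List.map_map, ih, Walk.getVert_zero]
    rfl

lemma cycle_getVert_inj {v : α} {c : G.Walk v v} (hc : c.IsCycle)
    {a b : ℕ} (ha : a < c.length) (hb : b < c.length) (h : c.getVert a = c.getVert b) :
    a = b := by
  have hnodup : c.support.tail.Nodup := hc.support_nodup
  rw [support_eq_map, List.range_succ_eq_map, List.map_cons, List.tail_cons, List.map_map]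
    at hnodup
  have key : ∀ x ∈ List.range c.length, ∀ y ∈ List.range c.length,
      c.getVert (x+1) = c.getVert (y+1) → x = y := by
    intro x hx y hy hxy
    exact List.inj_on_of_nodup_map hnodup hx hy hxy
  have hv0 : c.getVert 0 = v := c.getVert_zero
  have hvn : c.getVert c.length = v := c.getVert_length
  have hlen : 3 ≤ c.length := hc.three_le_length
  rcases Nat.eq_zero_or_pos a with rfl | hapos
  · rcases Nat.eq_zero_or_pos b with rfl | hbpos
    · rfl
    · exfalso
      have : c.getVert ((c.length - 1) + 1) = c.getVert ((b-1)+1) := by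
        rw [show c.length - 1 + 1 = c.length by omega, hvn, show b - 1 + 1 = b by omega, ← h, hv0]
      have := key _ (List.mem_range.mpr (by omega)) _ (List.mem_range.mpr (by omega)) this
      omega
  · rcases Nat.eq_zero_or_pos b with rfl | hbpos
    · exfalso
      have : c.getVert ((c.length - 1) + 1) = c.getVert ((a-1)+1) := by
        rw [show c.length - 1 + 1 = c.length by omega, hvn, show a - 1 + 1 = a by omega, h, hv0]
      have := key _ (List.mem_range.mpr (by omega)) _ (List.mem_range.mpr (by omega)) this
      omega
    · have : c.getVert ((a-1)+1) = c.getVert ((b-1)+1) := by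
        rw [show a - 1 + 1 = a by omega, show b - 1 + 1 = b by omega, h]
      have := key _ (List.mem_range.mpr (by omega)) _ (List.mem_range.mpr (by omega)) this
      omega

lemma isCycleEmb_of_cycle {v : α} (c : G.Walk v v) (hc : c.IsCycle) :
    IsCycleEmb G c.length (fun i => c.getVert i.val) := by
  have h3 := hc.three_le_length
  haveI : NeZero c.length := ⟨by omega⟩
  refine ⟨h3, ?_, ?_⟩
  · intro i j hij
    exact ZMod.val_injective _
      (cycle_getVert_inj hc (ZMod.val_lt i) (ZMod.val_lt j) hij)
  · intro i
    have hkl : i.val < c.length := ZMod.val_lt i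
    have hi : ((i.val : ℕ) : ZMod c.length) = i := ZMod.natCast_rightInverse i
    have hrepr : i + 1 = ((i.val + 1 : ℕ) : ZMod c.length) := by
      rw [Nat.cast_add, Nat.cast_one, hi]
    by_cases hkk : i.val + 1 < c.length
    · have hval : (i+1).val = i.val + 1 := by
        rw [hrepr]
        exact ZMod.val_cast_of_lt hkk
      simpa only [hval] using c.adj_getVert_succ hkl
    · have hsum : i.val + 1 = c.length := by omega
      have hz : i + 1 = 0 := by
        rw [hrepr, hsum, ZMod.natCast_self]
      have hval : (i+1).val = 0 := by rw [hz]; exact ZMod.val_zero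
      have hA := c.adj_getVert_succ hkl
      rw [hsum, c.getVert_length] at hA
      simpa only [hval, c.getVert_zero] using hA

lemma isCycleEmb_comp {β : Type*} {G' : SimpleGraph β} (e : G ↪g G') {n : ℕ}
    {f : ZMod n → α} (h : IsCycleEmb G n f) : IsCycleEmb G' n (fun i => e (f i)) :=
  ⟨h.1, fun _ _ hij => h.2.1 (e.injective hij), fun i => e.map_adj_iff.mpr (h.2.2 i)⟩

lemma cycle_walk {n : ℕ} {f : ZMod n → α} (h : IsCycleEmb G n f) (p : ZMod n) (t : ℕ) :
    ∃ w : G.Walk (f p) (f (p + (t : ZMod n))), w.length = t := by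
  induction t with
  | zero => exact ⟨Walk.nil.copy rfl (by simp), by simp⟩
  | succ t ih =>
    obtain ⟨w, hw⟩ := ih
    have hadj : G.Adj (f (p + (t : ZMod n))) (f (p + (t : ZMod n) + 1)) := h.2.2 _
    have hcast : p + ((t+1 : ℕ) : ZMod n) = p + (t : ZMod n) + 1 := by push_cast; ring
    exact ⟨(w.append hadj.toWalk).copy rfl (by rw [hcast]), by simp [hw]⟩

lemma cycle_nbrs {n : ℕ} {f : ZMod n → α} (h : IsCycleEmb G n f) (p : ZMod n)
    {x y : α} (hxy : ∀ b, G.Adj (f p) b → b = x ∨ b = y) :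
    (f (p - 1) = x ∧ f (p + 1) = y) ∨ (f (p - 1) = y ∧ f (p + 1) = x) := by
  obtain ⟨h3, hinj, hadj⟩ := h
  have h20 : ((2:ℕ) : ZMod n) ≠ 0 := by
    intro hcon
    have := (CharP.cast_eq_zero_iff (ZMod n) n 2).mp (by exact_mod_cast hcon)
    have := Nat.le_of_dvd (by norm_num) this
    omega
  have hne : f (p - 1) ≠ f (p + 1) := by
    intro hEq
    have he := hinj hEq
    apply h20
    push_cast
    linear_combination -he
  have h1 : G.Adj (f p) (f (p+1)) := hadj p
  have h2 : G.Adj (f p) (f (p-1)) := by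
    have := (hadj (p-1)).symm
    rwa [show p - 1 + 1 = p by ring] at this
  rcases hxy _ h1 with e1 | e1 <;> rcases hxy _ h2 with e2 | e2 <;>
    first
      | (exact absurd (e2.trans e1.symm) hne)
      | (exact Or.inl ⟨e2, e1⟩)
      | (exact Or.inr ⟨e2, e1⟩)

end CycleMachinery

section ThetaCycles

lemma theta_cycle_hubs {s n : ℕ} (hs : 3 ≤ s) {f : ZMod n → TV s}
    (hf : IsCycleEmb (thetaGraph s) n f) :
    (∃ p, f p = Sum.inl 0) ∧ (∃ q, f q = Sum.inl 1) := by
  haveI : NeZero n := ⟨by have := hf.1; omega⟩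
  constructor
  · obtain ⟨p, -, hp⟩ := Finset.exists_min_image Finset.univ (fun i => phi s (f i))
      ⟨0, Finset.mem_univ 0⟩
    refine ⟨p, ?_⟩
    rcases hv : f p with a | ⟨j, k⟩
    · have ha2 := a.isLt
      rcases Nat.lt_or_ge a.val 1 with hlt | hge
      · have ha : a = 0 := Fin.ext (by simp only [Fin.val_zero]; omega)
        subst ha
        rfl
      · exfalso
        have ha : a = 1 := Fin.ext (by simp only [Fin.val_one]; omega)
        subst ha
        have hadj : (thetaGraph s).Adj (f p) (f (p+1)) := hf.2.2 p
        rw [hv] at hadj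
        obtain ⟨j, k, hk, hk0⟩ := theta_nbr_inl1 hadj
        have := hp (p+1) (Finset.mem_univ _)
        rw [hv, hk] at this
        simp only [phi_inl1, phi_inr] at this
        have := k.isLt
        omega
    · exfalso
      have hnb : ∀ b, (thetaGraph s).Adj (f p) b → b = dn j k ∨ b = up j k := by
        rw [hv]; exact fun b h => theta_nbr_pair h
      have hdnlt : phi s (dn j k) < phi s (f p) := by
        rw [phi_dn, hv]; omega
      rcases cycle_nbrs hf p hnb with ⟨h1, -⟩ | ⟨-, h1⟩
      · have := hp (p-1) (Finset.mem_univ _); rw [h1] at this; omega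
      · have := hp (p+1) (Finset.mem_univ _); rw [h1] at this; omega
  · obtain ⟨p, -, hp⟩ := Finset.exists_max_image Finset.univ (fun i => phi s (f i))
      ⟨0, Finset.mem_univ 0⟩
    refine ⟨p, ?_⟩
    rcases hv : f p with a | ⟨j, k⟩
    · have ha2 := a.isLt
      rcases Nat.lt_or_ge a.val 1 with hlt | hge
      · exfalso
        have ha : a = 0 := Fin.ext (by simp only [Fin.val_zero]; omega)
        subst ha
        have hadj : (thetaGraph s).Adj (f p) (f (p+1)) := hf.2.2 p
        rw [hv] at hadj
        obtain ⟨j, k, hk, hk0⟩ := theta_nbr_inl0 hadj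
        have := hp (p+1) (Finset.mem_univ _)
        rw [hv, hk] at this
        simp only [phi_inl0, phi_inr] at this
        omega
      · have ha : a = 1 := Fin.ext (by simp only [Fin.val_one]; omega)
        subst ha
        rfl
    · exfalso
      have hnb : ∀ b, (thetaGraph s).Adj (f p) b → b = dn j k ∨ b = up j k := by
        rw [hv]; exact fun b h => theta_nbr_pair h
      have huplt : phi s (f p) < phi s (up j k) := by
        rw [phi_up, hv]; omega
      rcases cycle_nbrs hf p hnb with ⟨-, h1⟩ | ⟨h1, -⟩
      · have := hp (p+1) (Finset.mem_univ _); rw [h1] at this; omega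
      · have := hp (p-1) (Finset.mem_univ _); rw [h1] at this; omega

lemma theta_cycle_long {s n : ℕ} (hs : 3 ≤ s) {f : ZMod n → TV s}
    (hf : IsCycleEmb (thetaGraph s) n f) : s + 2 ≤ n := by
  haveI : NeZero n := ⟨by have := hf.1; omega⟩
  obtain ⟨⟨p, hp⟩, ⟨q, hq⟩⟩ := theta_cycle_hubs hs hf
  set t := (q - p).val with ht
  have htn : t < n := ZMod.val_lt _
  obtain ⟨w, hw⟩ := cycle_walk hf p t
  have hpt : p + (t : ZMod n) = q := by
    rw [ht, ZMod.natCast_rightInverse (q - p)]; ring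
  have hb := walk_phi (phi s) (fun a b h => phi_adj h) w
  rw [hw, hpt, hp, hq] at hb
  simp only [phi_inl0, phi_inl1] at hb
  rw [zero_sub, abs_neg, abs_of_nonneg (by positivity)] at hb
  omega

lemma theta_no_dom {s n : ℕ} (hs : 3 ≤ s) (f : ZMod n → TV s) :
    ¬ IsDominatingCycle (thetaGraph s) n f := by
  rintro ⟨hC, hD⟩
  have h01 : (0:ℕ) < s := by omega
  have h1s : (1:ℕ) < s := by omega
  have hj0 : ∀ j : Fin 3, ∃ p, f p = Sum.inr (j, ⟨0, h01⟩) := by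
    intro j
    rcases hD _ _ (theta_adj_succ j 0 h1s) with ⟨p, hp⟩ | ⟨p, hp⟩
    · exact ⟨p, hp⟩
    · have hnb : ∀ b, (thetaGraph s).Adj (f p) b →
          b = dn j ⟨1, h1s⟩ ∨ b = up j ⟨1, h1s⟩ := by
        rw [hp]; exact fun b h => theta_nbr_pair h
      have hdn : dn j (⟨1, h1s⟩ : Fin s) = Sum.inr (j, ⟨0, h01⟩) := by
        rw [dn, dif_neg (by norm_num)]
        exact rfl
      rcases cycle_nbrs hC p hnb with ⟨h1, -⟩ | ⟨-, h1⟩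
      · exact ⟨p - 1, by rw [h1, hdn]⟩
      · exact ⟨p + 1, by rw [h1, hdn]⟩
  have key : ∀ j : Fin 3, ∃ p, f p = Sum.inr (j, ⟨0, h01⟩) ∧
      ((f (p - 1) = Sum.inl 0) ∨ (f (p + 1) = Sum.inl 0)) := by
    intro j
    obtain ⟨p, hp⟩ := hj0 j
    have hnb : ∀ b, (thetaGraph s).Adj (f p) b →
        b = dn j ⟨0, h01⟩ ∨ b = up j ⟨0, h01⟩ := by
      rw [hp]; exact fun b h => theta_nbr_pair h
    have hdn : dn j (⟨0, h01⟩ : Fin s) = Sum.inl 0 := by rw [dn, dif_pos rfl]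
    rcases cycle_nbrs hC p hnb with ⟨h1, -⟩ | ⟨-, h1⟩
    · exact ⟨p, hp, Or.inl (by rw [h1, hdn])⟩
    · exact ⟨p, hp, Or.inr (by rw [h1, hdn])⟩
  obtain ⟨p0, hp0, he0⟩ := key 0
  obtain ⟨p1, hp1, he1⟩ := key 1
  obtain ⟨p2, hp2, he2⟩ := key 2
  obtain ⟨q0, hq0⟩ : ∃ q, f q = Sum.inl 0 := by
    rcases he0 with h | h
    exacts [⟨p0 - 1, h⟩, ⟨p0 + 1, h⟩]
  have hinj := hC.2.1
  have hval : ∀ (p : ZMod n) (j : Fin 3), f p = Sum.inr (j, ⟨0, h01⟩) →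
      ((f (p-1) = Sum.inl 0) ∨ (f (p+1) = Sum.inl 0)) → p = q0 + 1 ∨ p = q0 - 1 := by
    intro p j hp he
    rcases he with h | h
    · left
      have : p - 1 = q0 := hinj (by rw [h, hq0])
      linear_combination this
    · right
      have : p + 1 = q0 := hinj (by rw [h, hq0])
      linear_combination this
  have h0 := hval p0 0 hp0 he0
  have h1 := hval p1 1 hp1 he1
  have h2 := hval p2 2 hp2 he2
  have hne : ∀ (a b : Fin 3) (pa pb : ZMod n), a ≠ b → f pa = Sum.inr (a, ⟨0, h01⟩) →
      f pb = Sum.inr (b, ⟨0, h01⟩) → pa ≠ pb := by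
    intro a b pa pb hab ha hb hEq
    apply hab
    have : Sum.inr (α := Fin 2) (a, (⟨0, h01⟩ : Fin s)) = Sum.inr (b, ⟨0, h01⟩) := by
      rw [← ha, ← hb, hEq]
    simpa using this
  have h01' := hne 0 1 p0 p1 (by decide) hp0 hp1
  have h02 := hne 0 2 p0 p2 (by decide) hp0 hp2
  have h12 := hne 1 2 p1 p2 (by decide) hp1 hp2
  rcases h0 with h0 | h0 <;> rcases h1 with h1 | h1 <;> rcases h2 with h2 | h2 <;>
    simp_all

end ThetaCycles

section Connectivity

lemma induce_reach_down {s : ℕ} {S : Set (TV s)} (j : Fin 3) (h0 : Sum.inl 0 ∈ S) :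
    ∀ (k : ℕ) (hk : k < s)
      (hall : ∀ k' (hk' : k' < s), k' ≤ k → Sum.inr (j, ⟨k', hk'⟩) ∈ S),
    ((thetaGraph s).induce S).Reachable ⟨Sum.inr (j, ⟨k, hk⟩), hall k hk le_rfl⟩
      ⟨Sum.inl 0, h0⟩ := by
  intro k
  induction k with
  | zero =>
    intro hk hall
    have hadj : ((thetaGraph s).induce S).Adj ⟨Sum.inr (j, ⟨0, hk⟩), hall 0 hk le_rfl⟩
        ⟨Sum.inl 0, h0⟩ := by
      rw [SimpleGraph.comap_adj]
      exact (theta_adj_inl0 j hk).symm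
    exact hadj.reachable
  | succ k ih =>
    intro hk hall
    have hadj : ((thetaGraph s).induce S).Adj ⟨Sum.inr (j, ⟨k+1, hk⟩), hall _ hk le_rfl⟩
        ⟨Sum.inr (j, ⟨k, by omega⟩), hall k (by omega) (by omega)⟩ := by
      rw [SimpleGraph.comap_adj]
      exact (theta_adj_succ j k hk).symm
    exact hadj.reachable.trans (ih (by omega) (fun k' h h' => hall k' h (by omega)))

lemma induce_reach_up {s : ℕ} {S : Set (TV s)} (j : Fin 3) (h1 : Sum.inl 1 ∈ S) :
    ∀ (d k : ℕ) (hk : k < s) (_ : k + d = s - 1)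
      (hall : ∀ k' (hk' : k' < s), k ≤ k' → Sum.inr (j, ⟨k', hk'⟩) ∈ S),
    ((thetaGraph s).induce S).Reachable ⟨Sum.inr (j, ⟨k, hk⟩), hall k hk le_rfl⟩
      ⟨Sum.inl 1, h1⟩ := by
  intro d
  induction d with
  | zero =>
    intro k hk hd hall
    have hks : k = s - 1 := by omega
    subst hks
    have hadj : ((thetaGraph s).induce S).Adj ⟨Sum.inr (j, ⟨s-1, hk⟩), hall _ hk le_rfl⟩
        ⟨Sum.inl 1, h1⟩ := by
      rw [SimpleGraph.comap_adj]
      exact (theta_adj_inl1 j (by omega : 0 < s)).symm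
    exact hadj.reachable
  | succ d ih =>
    intro k hk hd hall
    have hk1 : k + 1 < s := by omega
    have hadj : ((thetaGraph s).induce S).Adj ⟨Sum.inr (j, ⟨k, hk⟩), hall k hk le_rfl⟩
        ⟨Sum.inr (j, ⟨k+1, hk1⟩), hall (k+1) hk1 (by omega)⟩ := by
      rw [SimpleGraph.comap_adj]
      exact theta_adj_succ j k hk1
    exact hadj.reachable.trans (ih (k+1) hk1 (by omega) (fun k' h h' => hall k' h (by omega)))

lemma theta_twoConnected {s : ℕ} (hs : 3 ≤ s) : TwoConnected (thetaGraph s) := by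
  constructor
  · simp only [Nat.card_eq_fintype_card, Fintype.card_sum, Fintype.card_prod, Fintype.card_fin]
    omega
  · intro v
    have hhub : ∃ hub : ({v}ᶜ : Set (TV s)),
        ∀ a : ({v}ᶜ : Set (TV s)), ((thetaGraph s).induce _).Reachable a hub := by
      have hmem : ∀ x : TV s, x ≠ v → x ∈ ({v}ᶜ : Set (TV s)) := by
        intro x hx; simpa using hx
      rcases v with b | ⟨j0, k0⟩
      · fin_cases b
        · -- v = inl 0 : hub is inl 1, go up
          refine ⟨⟨Sum.inl 1, hmem _ (by simp)⟩, ?_⟩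
          rintro ⟨a, ha⟩
          rcases a with b | ⟨j, k⟩
          · fin_cases b
            · simp at ha
            · exact Reachable.refl _
          · obtain ⟨k, hk⟩ := k
            exact induce_reach_up j (hmem _ (by simp)) (s - 1 - k) k hk (by omega)
              (fun k' h h' => hmem _ (by simp))
        · -- v = inl 1 : hub is inl 0, go down
          refine ⟨⟨Sum.inl 0, hmem _ (by simp)⟩, ?_⟩
          rintro ⟨a, ha⟩
          rcases a with b | ⟨j, k⟩
          · fin_cases b
            · exact Reachable.refl _
            · simp at ha
          · obtain ⟨k, hk⟩ := k
            exact induce_reach_down j (hmem _ (by simp)) k hk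
              (fun k' h h' => hmem _ (by simp))
      · -- v = inr (j0, k0) : hub is inl 0
        have h0 : Sum.inl 0 ∈ ({Sum.inr (j0,k0)}ᶜ : Set (TV s)) := hmem _ (by simp)
        have h1 : Sum.inl 1 ∈ ({Sum.inr (j0,k0)}ᶜ : Set (TV s)) := hmem _ (by simp)
        have hj1 : j0 + 1 ≠ j0 := by
          have : ∀ jj : Fin 3, jj + 1 ≠ jj := by decide
          exact this j0
        have hx10 : ((thetaGraph s).induce ({Sum.inr (j0,k0)}ᶜ : Set (TV s))).Reachable
            ⟨Sum.inl 1, h1⟩ ⟨Sum.inl 0, h0⟩ := by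
          have hall : ∀ k' (hk' : k' < s), Sum.inr (j0 + 1, ⟨k', hk'⟩) ∈
              ({Sum.inr (j0,k0)}ᶜ : Set (TV s)) := fun k' hk' => hmem _ (by simp [hj1])
          have hadj : ((thetaGraph s).induce ({Sum.inr (j0,k0)}ᶜ : Set (TV s))).Adj
              ⟨Sum.inl 1, h1⟩ ⟨Sum.inr (j0 + 1, ⟨s - 1, by omega⟩), hall _ (by omega)⟩ := by
            rw [SimpleGraph.comap_adj]
            exact theta_adj_inl1 (j0 + 1) (by omega)
          exact hadj.reachable.trans
            (induce_reach_down (j0 + 1) h0 (s-1) (by omega) (fun k' h h' => hall k' h))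
        refine ⟨⟨Sum.inl 0, h0⟩, ?_⟩
        rintro ⟨a, ha⟩
        rcases a with b | ⟨j, k⟩
        · fin_cases b
          · exact Reachable.refl _
          · exact hx10
        · obtain ⟨k, hk⟩ := k
          by_cases hj : j = j0
          · subst hj
            have hkk : k ≠ (k0 : ℕ) := by
              intro hcon
              apply ha
              simp only [Set.mem_singleton_iff, Sum.inr.injEq, Prod.mk.injEq, true_and]
              exact Fin.ext hcon
            rcases Nat.lt_or_ge k k0 with hlt | hge
            · exact induce_reach_down j h0 k hk
                (fun k' h h' => hmem _ (by
                  simp only [ne_eq, Sum.inr.injEq, Prod.mk.injEq, true_and, not_and]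
                  intro hcon
                  have : k' = (k0:ℕ) := by rw [← hcon]
                  omega))
            · have hgt : (k0 : ℕ) < k := by omega
              exact (induce_reach_up j h1 (s - 1 - k) k hk (by omega)
                (fun k' h h' => hmem _ (by
                  simp only [ne_eq, Sum.inr.injEq, Prod.mk.injEq, true_and, not_and]
                  intro hcon
                  have : k' = (k0:ℕ) := by rw [← hcon]
                  omega))).trans hx10
          · exact induce_reach_down j h0 k hk
              (fun k' h h' => hmem _ (by simp [hj]))
    obtain ⟨hub, hhub⟩ := hhub
    rw [SimpleGraph.connected_iff]
    exact ⟨fun a b => (hhub a).trans (hhub b).symm, ⟨hub⟩⟩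

end Connectivity

end Stmt16Aux

/-- If a finite family `H` of connected graphs is such that, for some `n₀`, every
2-connected `H`-free graph of order at least `n₀` has a dominating cycle, then some
member of `H` is a tree with maximum degree at most 3 and at most one degree-3 vertex. -/
theorem stmt16 {ι : Type} [Fintype ι] (m : ι → ℕ) (H : ∀ i : ι, SimpleGraph (Fin (m i)))
    (hconn : ∀ i, (H i).Connected) (n₀ : ℕ)
    (hdom : ∀ (W : Type) [Fintype W] [DecidableEq W] (G : SimpleGraph W),
        TwoConnected G → n₀ ≤ Fintype.card W →
        (∀ i, ¬ Nonempty ((H i) ↪g G)) →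
        ∃ (n : ℕ) (f : ZMod n → W), IsDominatingCycle G n f) :
    ∃ i, (H i).IsTree ∧ (∀ v, ((H i).neighborSet v).ncard ≤ 3) ∧
      ∀ v w, ((H i).neighborSet v).ncard = 3 → ((H i).neighborSet w).ncard = 3 → v = w := by
  classical
  open Stmt16Aux in
  set M : ℕ := Finset.univ.sup m with hM
  set s : ℕ := max 3 (max n₀ (M + 1)) with hsdef
  have hs3 : 3 ≤ s := le_max_left _ _
  have hsn0 : n₀ ≤ s := le_trans (le_max_left _ _) (le_max_right _ _)
  have hsM : M + 1 ≤ s := le_trans (le_max_right _ _) (le_max_right _ _)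
  have h0s : (0:ℕ) < s := by omega
  -- some member of H embeds into the theta graph A_s
  have hemb : ∃ i, Nonempty ((H i) ↪g (thetaGraph s)) := by
    by_contra hcon
    push_neg at hcon
    obtain ⟨n, f, hdc⟩ := hdom (Fin 2 ⊕ Fin 3 × Fin s) (thetaGraph s)
      (Stmt16Aux.theta_twoConnected hs3)
      (by
        simp only [Fintype.card_sum, Fintype.card_prod, Fintype.card_fin]
        omega)
      (fun i => not_nonempty_iff.mpr (hcon i))
    exact Stmt16Aux.theta_no_dom hs3 f hdc
  obtain ⟨i, ⟨e⟩⟩ := hemb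
  have hmi : m i + 1 ≤ s := by
    have : m i ≤ M := Finset.le_sup (Finset.mem_univ i)
    omega
  -- degree comparison through the embedding
  have himg : ∀ v : Fin (m i),
      ((H i).neighborSet v).ncard ≤ ((thetaGraph s).neighborSet (e v)).ncard := by
    intro v
    have hsub : (fun x => e x) '' (H i).neighborSet v ⊆ (thetaGraph s).neighborSet (e v) := by
      rintro _ ⟨w, hw, rfl⟩
      exact e.map_adj_iff.mpr hw
    calc ((H i).neighborSet v).ncard
        = ((fun x => e x) '' (H i).neighborSet v).ncard :=
          (Set.ncard_image_of_injective _ e.injective).symm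
      _ ≤ ((thetaGraph s).neighborSet (e v)).ncard :=
          Set.ncard_le_ncard hsub (Set.toFinite _)
  -- theta graph degree bounds
  have hdeg2 : ∀ (j : Fin 3) (k : Fin s),
      ((thetaGraph s).neighborSet (Sum.inr (j,k))).ncard ≤ 2 := by
    intro j k
    have hsub : (thetaGraph s).neighborSet (Sum.inr (j,k)) ⊆
        {Stmt16Aux.dn j k, Stmt16Aux.up j k} := by
      intro b hb
      exact Stmt16Aux.theta_nbr_pair hb
    have h1 := Set.ncard_insert_le (Stmt16Aux.dn j k) {Stmt16Aux.up j k}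
    have h2 : ({Stmt16Aux.up j k} : Set (TV s)).ncard = 1 := Set.ncard_singleton _
    have := Set.ncard_le_ncard hsub (Set.toFinite _)
    omega
  have hdeg3 : ∀ w : TV s, ((thetaGraph s).neighborSet w).ncard ≤ 3 := by
    intro w
    rcases w with a | ⟨j, k⟩
    · fin_cases a
      · show ((thetaGraph s).neighborSet (Sum.inl 0)).ncard ≤ 3
        have hsub : (thetaGraph s).neighborSet (Sum.inl 0) ⊆
            {Sum.inr (0, ⟨0, h0s⟩), Sum.inr (1, ⟨0, h0s⟩), Sum.inr (2, ⟨0, h0s⟩)} := by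
          intro b hb
          obtain ⟨j, k, rfl, hk0⟩ := Stmt16Aux.theta_nbr_inl0 hb
          have : k = ⟨0, h0s⟩ := Fin.ext hk0
          subst this
          fin_cases j <;> simp
        have h1 := Set.ncard_insert_le (Sum.inr (0, (⟨0, h0s⟩ : Fin s)) : TV s)
          {Sum.inr (1, ⟨0, h0s⟩), Sum.inr (2, ⟨0, h0s⟩)}
        have h2 := Set.ncard_insert_le (Sum.inr (1, (⟨0, h0s⟩ : Fin s)) : TV s)
          {Sum.inr (2, ⟨0, h0s⟩)}
        have h3 : ({Sum.inr (2, ⟨0, h0s⟩)} : Set (TV s)).ncard = 1 := Set.ncard_singleton _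
        have := Set.ncard_le_ncard hsub (Set.toFinite _)
        omega
      · show ((thetaGraph s).neighborSet (Sum.inl 1)).ncard ≤ 3
        have hs1 : s - 1 < s := by omega
        have hsub : (thetaGraph s).neighborSet (Sum.inl 1) ⊆
            {Sum.inr (0, ⟨s-1, hs1⟩), Sum.inr (1, ⟨s-1, hs1⟩), Sum.inr (2, ⟨s-1, hs1⟩)} := by
          intro b hb
          obtain ⟨j, k, rfl, hk0⟩ := Stmt16Aux.theta_nbr_inl1 hb
          have : k = ⟨s-1, hs1⟩ := Fin.ext hk0
          subst this
          fin_cases j <;> simp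
        have h1 := Set.ncard_insert_le (Sum.inr (0, (⟨s-1, hs1⟩ : Fin s)) : TV s)
          {Sum.inr (1, ⟨s-1, hs1⟩), Sum.inr (2, ⟨s-1, hs1⟩)}
        have h2 := Set.ncard_insert_le (Sum.inr (1, (⟨s-1, hs1⟩ : Fin s)) : TV s)
          {Sum.inr (2, ⟨s-1, hs1⟩)}
        have h3 : ({Sum.inr (2, ⟨s-1, hs1⟩)} : Set (TV s)).ncard = 1 := Set.ncard_singleton _
        have := Set.ncard_le_ncard hsub (Set.toFinite _)
        omega
    · exact le_trans (hdeg2 j k) (by omega)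
  -- degree-3 vertices go to the hubs
  have hhub : ∀ u : Fin (m i), ((H i).neighborSet u).ncard = 3 →
      e u = Sum.inl 0 ∨ e u = Sum.inl 1 := by
    intro u hu
    rcases hev : e u with a | ⟨j, k⟩
    · have ha2 := a.isLt
      rcases Nat.lt_or_ge a.val 1 with hlt | hge
      · have ha : a = 0 := Fin.ext (by simp only [Fin.val_zero]; omega)
        subst ha
        exact Or.inl rfl
      · have ha : a = 1 := Fin.ext (by simp only [Fin.val_one]; omega)
        subst ha
        exact Or.inr rfl
    · exfalso
      have h1 := himg u
      rw [hu, hev] at h1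
      have h2 := hdeg2 j k
      omega
  refine ⟨i, ⟨hconn i, ?_⟩, fun v => (himg v).trans (hdeg3 _), ?_⟩
  · -- acyclic
    intro v c hc
    have hce := Stmt16Aux.isCycleEmb_of_cycle c hc
    have h3 : 3 ≤ c.length := hc.three_le_length
    haveI : NeZero c.length := ⟨by omega⟩
    have hcard : c.length ≤ m i := by
      have := Fintype.card_le_of_injective _ hce.2.1
      rwa [ZMod.card, Fintype.card_fin] at this
    have hlong := Stmt16Aux.theta_cycle_long hs3 (Stmt16Aux.isCycleEmb_comp e hce)
    omega
  · -- at most one vertex of degree 3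
    intro v w hv3 hw3
    by_contra hvw
    have hew : e v ≠ e w := fun hEq => hvw (e.injective hEq)
    obtain ⟨p⟩ := (hconn i) v w
    have hlen : (p.toPath : (H i).Walk v w).length < m i := by
      have := SimpleGraph.Walk.IsPath.length_lt (p.toPath.property)
      rwa [Fintype.card_fin] at this
    set q : (thetaGraph s).Walk (e v) (e w) :=
      SimpleGraph.Walk.map (e : (H i) →g (thetaGraph s)) (p.toPath : (H i).Walk v w) with hq
    have hqlen : q.length < m i := by
      rw [hq, SimpleGraph.Walk.length_map]
      exact hlen
    have hb := Stmt16Aux.walk_phi (Stmt16Aux.phi s)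
      (fun a b h => Stmt16Aux.phi_adj h) q
    rcases hhub v hv3 with h | h <;> rcases hhub w hw3 with h' | h'
    · exact hew (h.trans h'.symm)
    · have hv0 : Stmt16Aux.phi s (e v) = 0 := by rw [h]; exact Stmt16Aux.phi_inl0
      have hw1 : Stmt16Aux.phi s (e w) = (s:ℤ)+1 := by rw [h']; exact Stmt16Aux.phi_inl1
      rw [hv0, hw1, zero_sub, abs_neg, abs_of_nonneg (by positivity)] at hb
      omega
    · have hv0 : Stmt16Aux.phi s (e v) = (s:ℤ)+1 := by rw [h]; exact Stmt16Aux.phi_inl1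
      have hw1 : Stmt16Aux.phi s (e w) = 0 := by rw [h']; exact Stmt16Aux.phi_inl0
      rw [hv0, hw1, sub_zero, abs_of_nonneg (by positivity)] at hb
      omega
    · exact hew (h.trans h'.symm)
end

section
/- Let H = {H₁, H₂} be a pair of connected graphs such that for some n₀ every 2-connected H-free graph of order at least n₀ has a dominating cycle, and suppose H₁ has diameter at least 3. Then H₂ is an induced subgraph of K₁ + 3K₂ or H₂ is isomorphic to K₄ minus an edge. -/
open SimpleGraph

section Aux
open Sum

lemma fin2_cases {t u : Fin 2} (h : t ≠ u) : (t = 0 ∧ u = 1) ∨ (t = 1 ∧ u = 0) := by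
  fin_cases t <;> fin_cases u <;> simp_all

-- APrime adjacency
@[simp] lemma AP_adj_ll {s : ℕ} (i j : Fin 2) : ¬ (APrime s).Adj (inl i) (inl j) := by
  simp [APrime, fromRel_adj]

@[simp] lemma AP_adj_lr {s : ℕ} (i : Fin 2) (p : Fin s × Fin 2) :
    (APrime s).Adj (inl i) (inr p) := by
  simp only [APrime, fromRel_adj]
  exact ⟨by simp, Or.inl (Or.inl ⟨i, p, rfl, rfl⟩)⟩

@[simp] lemma AP_adj_rl {s : ℕ} (i : Fin 2) (p : Fin s × Fin 2) :
    (APrime s).Adj (inr p) (inl i) := (AP_adj_lr i p).symm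

@[simp] lemma AP_adj_rr {s : ℕ} (p q : Fin s × Fin 2) :
    (APrime s).Adj (inr p) (inr q) ↔ p.1 = q.1 ∧ p.2 ≠ q.2 := by
  obtain ⟨j, t⟩ := p; obtain ⟨k, u⟩ := q
  simp only [APrime, fromRel_adj, ne_eq, inr.injEq, Prod.mk.injEq, reduceCtorEq,
    false_and, and_false, exists_const, exists_false, false_or, or_false,
    exists_and_left, exists_and_right, exists_eq_left, exists_eq_right]
  constructor
  · rintro ⟨hne, (⟨h1, h2⟩ | ⟨h1, h2⟩) | (⟨h1, h2⟩ | ⟨h1, h2⟩)⟩ <;> subst_vars <;>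
      simp_all
  · rintro ⟨rfl, hne⟩
    refine ⟨by simp [hne], ?_⟩
    rcases fin2_cases hne with ⟨rfl, rfl⟩ | ⟨rfl, rfl⟩
    · exact Or.inl ⟨j, by norm_num⟩
    · exact Or.inr ⟨j, by norm_num⟩

-- ADoublePrime adjacency
@[simp] lemma ADP_adj_l {s : ℕ} (i : Fin 2) (z : Fin 2 ⊕ (Fin 2 × Fin 2 ⊕ Fin s)) :
    (ADoublePrime s).Adj (inl i) z ↔ z ≠ inl i := by
  constructor
  · intro h he; exact h.ne he.symm
  · intro h
    simp only [ADoublePrime, fromRel_adj]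
    exact ⟨fun hh => h hh.symm, Or.inl (Or.inl ⟨i, rfl⟩)⟩

@[simp] lemma ADP_adj_r {s : ℕ} (i : Fin 2) (z : Fin 2 ⊕ (Fin 2 × Fin 2 ⊕ Fin s)) :
    (ADoublePrime s).Adj z (inl i) ↔ z ≠ inl i := by
  rw [adj_comm, ADP_adj_l]

@[simp] lemma ADP_adj_kk {s : ℕ} (p q : Fin 2 × Fin 2) :
    (ADoublePrime s).Adj (inr (inl p)) (inr (inl q)) ↔ p.1 = q.1 ∧ p.2 ≠ q.2 := by
  obtain ⟨j, t⟩ := p; obtain ⟨k, u⟩ := q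
  simp only [ADoublePrime, fromRel_adj, ne_eq, inr.injEq, inl.injEq, Prod.mk.injEq,
    reduceCtorEq, false_and, and_false, exists_const, exists_false, false_or, or_false]
  constructor
  · rintro ⟨hne, h⟩
    rcases h with (⟨j',h1,h2⟩|⟨p',q',h,-⟩)|(⟨j',h1,h2⟩|⟨p',q',h,-⟩) <;>
      simp_all
  · rintro ⟨rfl, hne⟩
    refine ⟨by simp [hne], ?_⟩
    rcases fin2_cases hne with ⟨rfl, rfl⟩ | ⟨rfl, rfl⟩
    · exact Or.inl ⟨j, by norm_num⟩
    · exact Or.inr ⟨j, by norm_num⟩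

@[simp] lemma ADP_adj_kc {s : ℕ} (p : Fin 2 × Fin 2) (q : Fin s) :
    ¬ (ADoublePrime s).Adj (inr (inl p)) (inr (inr q)) := by
  simp [ADoublePrime, fromRel_adj]

@[simp] lemma ADP_adj_ck {s : ℕ} (p : Fin 2 × Fin 2) (q : Fin s) :
    ¬ (ADoublePrime s).Adj (inr (inr q)) (inr (inl p)) := by
  rw [adj_comm]; exact ADP_adj_kc p q

@[simp] lemma ADP_adj_cc {s : ℕ} (p q : Fin s) :
    (ADoublePrime s).Adj (inr (inr p)) (inr (inr q)) ↔ p ≠ q := by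
  constructor
  · intro h he; subst he; exact h.ne rfl
  · intro h
    simp only [ADoublePrime, fromRel_adj]
    exact ⟨by simp [h], Or.inl (Or.inr (Or.inr ⟨p, q, rfl, rfl⟩))⟩

lemma exists_P4 {V : Type*} (H : SimpleGraph V) (hc : H.Connected)
    (hdiam : ∃ a b : V, 3 ≤ H.dist a b) :
    ∃ v0 v1 v2 v3 : V, H.Adj v0 v1 ∧ H.Adj v1 v2 ∧ H.Adj v2 v3 ∧
      ¬H.Adj v0 v2 ∧ ¬H.Adj v0 v3 ∧ ¬H.Adj v1 v3 ∧
      v0 ≠ v2 ∧ v0 ≠ v3 ∧ v1 ≠ v3 := by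
  obtain ⟨a, b, hd⟩ := hdiam
  obtain ⟨p, hp⟩ := (hc.preconnected a b).exists_walk_length_eq_dist
  cases p with
  | nil => simp at hd
  | cons h1 p =>
  rename_i w1
  cases p with
  | nil => simp at hp; omega
  | cons h2 p =>
  rename_i w2
  cases p with
  | nil => simp at hp; omega
  | cons h3 q =>
  rename_i w3
  simp only [Walk.length_cons] at hp
  refine ⟨a, w1, w2, w3, h1, h2, h3, ?_, ?_, ?_, ?_, ?_, ?_⟩
  · intro h
    have := dist_le (Walk.cons h (Walk.cons h3 q))
    simp only [Walk.length_cons] at this; omega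
  · intro h
    have := dist_le (Walk.cons h q)
    simp only [Walk.length_cons] at this; omega
  · intro h
    have := dist_le (Walk.cons h1 (Walk.cons h q))
    simp only [Walk.length_cons] at this; omega
  · intro h
    have := dist_le ((Walk.cons h3 q).copy h.symm rfl)
    simp only [Walk.length_copy, Walk.length_cons] at this; omega
  · intro h
    have := dist_le (q.copy h.symm rfl)
    simp only [Walk.length_copy] at this; omega
  · intro h
    have := dist_le (Walk.cons h1 (q.copy h.symm rfl))
    simp only [Walk.length_cons, Walk.length_copy] at this; omega

lemma AP_noP4 {s : ℕ} {a0 a1 a2 a3 : Fin 2 ⊕ Fin s × Fin 2}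
    (h01 : (APrime s).Adj a0 a1) (h12 : (APrime s).Adj a1 a2)
    (h23 : (APrime s).Adj a2 a3)
    (n02 : ¬(APrime s).Adj a0 a2) (n03 : ¬(APrime s).Adj a0 a3)
    (n13 : ¬(APrime s).Adj a1 a3) (d02 : a0 ≠ a2) : False := by
  rcases a0 with i0 | p0 <;> rcases a1 with i1 | p1 <;>
    rcases a2 with i2 | p2 <;> rcases a3 with i3 | p3 <;> simp_all <;>
    obtain ⟨q0, t0⟩ := p0 <;> obtain ⟨q1, t1⟩ := p1 <;> obtain ⟨q2, t2⟩ := p2 <;>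
    simp_all <;> fin_cases t0 <;> fin_cases t1 <;> fin_cases t2 <;> simp_all

lemma ADP_noP4 {s : ℕ} {a0 a1 a2 a3 : Fin 2 ⊕ (Fin 2 × Fin 2 ⊕ Fin s)}
    (h01 : (ADoublePrime s).Adj a0 a1) (h12 : (ADoublePrime s).Adj a1 a2)
    (h23 : (ADoublePrime s).Adj a2 a3)
    (n02 : ¬(ADoublePrime s).Adj a0 a2)
    (n03 : ¬(ADoublePrime s).Adj a0 a3) (n13 : ¬(ADoublePrime s).Adj a1 a3)
    (d03 : a0 ≠ a3) (d13 : a1 ≠ a3) : False := by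
  -- a0 and a3 are not inl, a1 and a2 are not inl; all in one component.
  rcases a0 with i0 | b0
  · exact n03 ((ADP_adj_l i0 a3).mpr (Ne.symm d03))
  rcases a1 with i1 | b1
  · exact n13 ((ADP_adj_l i1 a3).mpr (Ne.symm d13))
  rcases a3 with i3 | b3
  · exact n03 ((ADP_adj_r i3 (inr b0)).mpr (by simp))
  rcases a2 with i2 | b2
  · exact n02 ((ADP_adj_r i2 (inr b0)).mpr (by simp))
  rcases b0 with p0 | c0 <;> rcases b1 with p1 | c1 <;>
    rcases b2 with p2 | c2 <;> rcases b3 with p3 | c3 <;> simp_all <;>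
    obtain ⟨q0, t0⟩ := p0 <;> obtain ⟨q1, t1⟩ := p1 <;>
    try obtain ⟨q2, t2⟩ := p2 <;> try obtain ⟨q3, t3⟩ := p3
  all_goals simp_all
  all_goals (fin_cases t0 <;> fin_cases t1 <;> fin_cases t2 <;> fin_cases t3 <;> simp_all)

lemma cycle_exit {V : Type*} {G : SimpleGraph V} {n : ℕ} {f : ZMod n → V} {x y : V}
    (hn : 3 ≤ n) (hadj : ∀ i, G.Adj (f i) (f (i + 1)))
    (S : Set V) (hS : ∀ u ∈ S, ∀ v, G.Adj u v → v ∉ S → v = x ∨ v = y)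
    {i0 : ZMod n} (hi0 : f i0 ∈ S) {j0 : ZMod n} (hj0 : f j0 ∉ S) :
    ∃ i : ZMod n, (f i = x ∨ f i = y) ∧ f (i - 1) ∈ S := by
  classical
  haveI : NeZero n := ⟨by omega⟩
  have hex : ∃ k : ℕ, f (i0 + (k : ZMod n)) ∉ S := by
    refine ⟨(j0 - i0).val, ?_⟩
    rwa [ZMod.natCast_val, ZMod.cast_id, add_sub_cancel]
  let k := Nat.find hex
  have hk : f (i0 + (k : ZMod n)) ∉ S := Nat.find_spec hex
  have hk0 : k ≠ 0 := by
    intro h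
    apply hk
    rw [h]
    simpa using hi0
  have hkm : f (i0 + ((k - 1 : ℕ) : ZMod n)) ∈ S := by
    have := Nat.find_min hex (m := k - 1) (Nat.sub_lt (Nat.pos_of_ne_zero hk0) one_pos)
    simpa using this
  have hcast : (i0 + ((k - 1 : ℕ) : ZMod n)) + 1 = i0 + (k : ZMod n) := by
    have hk1 : 1 ≤ k := Nat.one_le_iff_ne_zero.mpr hk0
    rw [Nat.cast_sub hk1]
    push_cast
    ring
  have hadj' := hadj (i0 + ((k - 1 : ℕ) : ZMod n))
  rw [hcast] at hadj'
  have := hS _ hkm _ hadj' hk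
  exact ⟨i0 + (k : ZMod n), this, by rw [← hcast]; simpa using hkm⟩

def APcomp (s : ℕ) (j : Fin s) : Set (Fin 2 ⊕ Fin s × Fin 2) :=
  {v | v = inr (j, 0) ∨ v = inr (j, 1)}

lemma AP_noDom {s n : ℕ} (hs : 3 ≤ s) (f : ZMod n → (Fin 2 ⊕ Fin s × Fin 2)) :
    ¬ IsDominatingCycle (APrime s) n f := by
  rintro ⟨⟨hn, hinj, hadj⟩, hdom⟩
  have hdisj : ∀ {j k : Fin s} {v : Fin 2 ⊕ Fin s × Fin 2},
      v ∈ APcomp s j → v ∈ APcomp s k → j = k := by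
    rintro j k v (rfl | rfl) (h | h) <;>
      (injection h with h; exact (Prod.ext_iff.mp h).1)
  have hit : ∀ j : Fin s, ∃ i : ZMod n, f i ∈ APcomp s j := by
    intro j
    rcases hdom (inr (j, 0)) (inr (j, 1)) (by simp) with ⟨i, hi⟩ | ⟨i, hi⟩
    exacts [⟨i, Or.inl hi⟩, ⟨i, Or.inr hi⟩]
  have key : ∀ j : Fin s, ∃ i : ZMod n,
      (f i = inl 0 ∨ f i = inl 1) ∧ f (i - 1) ∈ APcomp s j := by
    intro j
    obtain ⟨i0, hi0⟩ := hit j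
    have hj' : ∃ j' : Fin s, j' ≠ j := by
      rcases eq_or_ne j ⟨0, by omega⟩ with rfl | h
      · exact ⟨⟨1, by omega⟩, by simp [Fin.ext_iff]⟩
      · exact ⟨⟨0, by omega⟩, fun hh => h hh.symm⟩
    obtain ⟨j', hj'⟩ := hj'
    obtain ⟨i1, hi1⟩ := hit j'
    have hout : f i1 ∉ APcomp s j := fun h => hj' (hdisj hi1 h)
    refine cycle_exit hn hadj (APcomp s j) ?_ hi0 hout
    rintro u (rfl | rfl) v huv hv
    · rcases v with i | ⟨k, t⟩
      · fin_cases i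
        · exact Or.inl rfl
        · exact Or.inr rfl
      · rw [AP_adj_rr] at huv
        obtain ⟨h1, h2⟩ := huv
        exfalso
        apply hv
        cases h1
        fin_cases t
        · exact absurd rfl h2
        · exact Or.inr rfl
    · rcases v with i | ⟨k, t⟩
      · fin_cases i
        · exact Or.inl rfl
        · exact Or.inr rfl
      · rw [AP_adj_rr] at huv
        obtain ⟨h1, h2⟩ := huv
        exfalso
        apply hv
        cases h1
        fin_cases t
        · exact Or.inl rfl
        · exact absurd rfl h2
  obtain ⟨i0, h0, g0⟩ := key ⟨0, by omega⟩
  obtain ⟨i1, h1, g1⟩ := key ⟨1, by omega⟩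
  obtain ⟨i2, h2, g2⟩ := key ⟨2, by omega⟩
  have pigeon : ∀ {a b : ZMod n} {ja jb : Fin s}, ja ≠ jb →
      f (a - 1) ∈ APcomp s ja → f (b - 1) ∈ APcomp s jb → f a = f b → False := by
    intro a b ja jb hne ha hb hfab
    have : a = b := hinj hfab
    subst this
    exact hne (hdisj ha hb)
  have d01 : (⟨0, by omega⟩ : Fin s) ≠ ⟨1, by omega⟩ := by simp [Fin.ext_iff]
  have d02 : (⟨0, by omega⟩ : Fin s) ≠ ⟨2, by omega⟩ := by simp [Fin.ext_iff]
  have d12 : (⟨1, by omega⟩ : Fin s) ≠ ⟨2, by omega⟩ := by simp [Fin.ext_iff]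
  rcases h0 with h0 | h0 <;> rcases h1 with h1 | h1 <;> rcases h2 with h2 | h2 <;>
    first
    | exact pigeon d01 g0 g1 (h0.trans h1.symm)
    | exact pigeon d02 g0 g2 (h0.trans h2.symm)
    | exact pigeon d12 g1 g2 (h1.trans h2.symm)

def ADPcompK (s : ℕ) (j : Fin 2) : Set (Fin 2 ⊕ (Fin 2 × Fin 2 ⊕ Fin s)) :=
  {v | v = inr (inl (j, 0)) ∨ v = inr (inl (j, 1))}

def ADPcompC (s : ℕ) : Set (Fin 2 ⊕ (Fin 2 × Fin 2 ⊕ Fin s)) :=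
  {v | ∃ p : Fin s, v = inr (inr p)}

lemma ADP_noDom {s n : ℕ} (hs : 2 ≤ s) (f : ZMod n → (Fin 2 ⊕ (Fin 2 × Fin 2 ⊕ Fin s))) :
    ¬ IsDominatingCycle (ADoublePrime s) n f := by
  rintro ⟨⟨hn, hinj, hadj⟩, hdom⟩
  have hdisjKK : ∀ {j k : Fin 2} {v}, v ∈ ADPcompK s j → v ∈ ADPcompK s k → j = k := by
    rintro j k v (rfl | rfl) (h | h) <;>
      (injection h with h; injection h with h; exact (Prod.ext_iff.mp h).1)
  have hdisjKC : ∀ {j : Fin 2} {v}, v ∈ ADPcompK s j → v ∈ ADPcompC s → False := by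
    rintro j v (rfl | rfl) ⟨p, h⟩ <;> (injection h with h; exact absurd h (by simp))
  have hitK : ∀ j : Fin 2, ∃ i : ZMod n, f i ∈ ADPcompK s j := by
    intro j
    rcases hdom (inr (inl (j, 0))) (inr (inl (j, 1))) (by simp) with ⟨i, hi⟩ | ⟨i, hi⟩
    exacts [⟨i, Or.inl hi⟩, ⟨i, Or.inr hi⟩]
  have hitC : ∃ i : ZMod n, f i ∈ ADPcompC s := by
    rcases hdom (inr (inr ⟨0, by omega⟩)) (inr (inr ⟨1, by omega⟩))
        (by simp [Fin.ext_iff]) with ⟨i, hi⟩ | ⟨i, hi⟩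
    exacts [⟨i, ⟨_, hi⟩⟩, ⟨i, ⟨_, hi⟩⟩]
  have exitK : ∀ j : Fin 2, ∃ i : ZMod n,
      (f i = inl 0 ∨ f i = inl 1) ∧ f (i - 1) ∈ ADPcompK s j := by
    intro j
    obtain ⟨i0, hi0⟩ := hitK j
    obtain ⟨i1, hi1⟩ := hitC
    have hout : f i1 ∉ ADPcompK s j := fun h => hdisjKC h hi1
    refine cycle_exit hn hadj (ADPcompK s j) ?_ hi0 hout
    rintro u (rfl | rfl) v huv hv
    · rcases v with i | (⟨k, t⟩ | p)
      · fin_cases i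
        · exact Or.inl rfl
        · exact Or.inr rfl
      · rw [ADP_adj_kk] at huv
        obtain ⟨h1, h2⟩ := huv
        exfalso
        apply hv
        cases h1
        fin_cases t
        · exact absurd rfl h2
        · exact Or.inr rfl
      · exact absurd huv (ADP_adj_kc _ _)
    · rcases v with i | (⟨k, t⟩ | p)
      · fin_cases i
        · exact Or.inl rfl
        · exact Or.inr rfl
      · rw [ADP_adj_kk] at huv
        obtain ⟨h1, h2⟩ := huv
        exfalso
        apply hv
        cases h1
        fin_cases t
        · exact Or.inl rfl
        · exact absurd rfl h2
      · exact absurd huv (ADP_adj_kc _ _)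
  have exitC : ∃ i : ZMod n,
      (f i = inl 0 ∨ f i = inl 1) ∧ f (i - 1) ∈ ADPcompC s := by
    obtain ⟨i0, hi0⟩ := hitC
    obtain ⟨i1, hi1⟩ := hitK 0
    have hout : f i1 ∉ ADPcompC s := fun h => hdisjKC hi1 h
    refine cycle_exit hn hadj (ADPcompC s) ?_ hi0 hout
    rintro u ⟨p, rfl⟩ v huv hv
    rcases v with i | (⟨k, t⟩ | q)
    · fin_cases i
      · exact Or.inl rfl
      · exact Or.inr rfl
    · exact absurd huv (ADP_adj_ck _ _)
    · exact absurd ⟨q, rfl⟩ hv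
  obtain ⟨i0, h0, g0⟩ := exitK 0
  obtain ⟨i1, h1, g1⟩ := exitK 1
  obtain ⟨i2, h2, g2⟩ := exitC
  have pigeonKK : ∀ {a b : ZMod n}, f (a - 1) ∈ ADPcompK s 0 →
      f (b - 1) ∈ ADPcompK s 1 → f a = f b → False := by
    intro a b ha hb hfab
    have : a = b := hinj hfab
    subst this
    exact absurd (hdisjKK ha hb) (by simp)
  have pigeonKC : ∀ {a b : ZMod n} {j : Fin 2}, f (a - 1) ∈ ADPcompK s j →
      f (b - 1) ∈ ADPcompC s → f a = f b → False := by
    intro a b j ha hb hfab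
    have : a = b := hinj hfab
    subst this
    exact hdisjKC ha hb
  rcases h0 with h0 | h0 <;> rcases h1 with h1 | h1 <;> rcases h2 with h2 | h2 <;>
    first
    | exact pigeonKK g0 g1 (h0.trans h1.symm)
    | exact pigeonKC g0 g2 (h0.trans h2.symm)
    | exact pigeonKC g1 g2 (h1.trans h2.symm)

lemma connected_of_hub {V : Type*} (G : SimpleGraph V) (h : V)
    (H : ∀ v, G.Reachable v h) : G.Connected := by
  rw [connected_iff]
  exact ⟨fun u v => (H u).trans (H v).symm, ⟨h⟩⟩

lemma AP_twoConnected {s : ℕ} (hs : 2 ≤ s) : TwoConnected (APrime s) := by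
  constructor
  · simp only [Nat.card_eq_fintype_card, Fintype.card_sum, Fintype.card_prod,
      Fintype.card_fin]
    omega
  intro v
  rcases v with i | q
  · -- removed a hub; other hub dominates
    have hmem : (inl (if i = 0 then 1 else 0) : Fin 2 ⊕ Fin s × Fin 2) ∈
        ({inl i}ᶜ : Set (Fin 2 ⊕ Fin s × Fin 2)) := by
      fin_cases i <;> simp
    apply connected_of_hub _ ⟨_, hmem⟩
    rintro ⟨u, hu⟩
    rcases u with j | p
    · have hj : j = (if i = 0 then 1 else 0) := by
        have hji : j ≠ i := by simpa using hu
        fin_cases i <;> fin_cases j <;> simp_all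
      subst hj
      exact Reachable.refl _
    · exact Adj.reachable (by exact AP_adj_rl _ p)
  · -- removed a pair vertex; hub inl 0
    have h0 : (inl 0 : Fin 2 ⊕ Fin s × Fin 2) ∈ ({inr q}ᶜ : Set _) := by simp
    apply connected_of_hub _ ⟨_, h0⟩
    rintro ⟨u, hu⟩
    rcases u with j | p
    · fin_cases j
      · exact Reachable.refl _
      · -- inl 1: go via another pair
        have hq : ∃ j' : Fin s, j' ≠ q.1 := by
          rcases eq_or_ne q.1 ⟨0, by omega⟩ with h | h
          · exact ⟨⟨1, by omega⟩, by rw [h]; simp [Fin.ext_iff]⟩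
          · exact ⟨⟨0, by omega⟩, fun hh => h hh.symm⟩
        obtain ⟨j', hj'⟩ := hq
        have hw : (inr (j', 0) : Fin 2 ⊕ Fin s × Fin 2) ∈ ({inr q}ᶜ : Set _) := by
          simp only [Set.mem_compl_iff, Set.mem_singleton_iff]
          intro h
          injection h with h
          exact hj' (congrArg Prod.fst h)
        exact Reachable.trans
          (Adj.reachable (v := ⟨_, hw⟩) (by exact AP_adj_lr 1 (j', 0)))
          (Adj.reachable (by exact AP_adj_rl 0 (j', 0)))
    · exact Adj.reachable (by exact AP_adj_rl 0 p)

lemma ADP_twoConnected {s : ℕ} : TwoConnected (ADoublePrime s) := by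
  constructor
  · simp only [Nat.card_eq_fintype_card, Fintype.card_sum, Fintype.card_prod,
      Fintype.card_fin]
    omega
  intro v
  have : ∃ i : Fin 2, (inl i : Fin 2 ⊕ (Fin 2 × Fin 2 ⊕ Fin s)) ≠ v := by
    rcases v with i | b
    · fin_cases i
      · exact ⟨1, by simp⟩
      · exact ⟨0, by simp⟩
    · exact ⟨0, by simp⟩
  obtain ⟨i, hi⟩ := this
  have hmem : (inl i : Fin 2 ⊕ (Fin 2 × Fin 2 ⊕ Fin s)) ∈ ({v}ᶜ : Set _) := by
    simpa using hi
  apply connected_of_hub _ ⟨_, hmem⟩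
  rintro ⟨u, hu⟩
  rcases eq_or_ne u (inl i) with rfl | hne
  · exact Reachable.refl _
  · exact Adj.reachable (by exact (ADP_adj_r i u).mpr hne)

instance : DecidableRel Wgraph.Adj := fun a b =>
  decidable_of_iff _ (SimpleGraph.fromRel_adj _ a b).symm
instance : DecidableRel K4minusGraph.Adj := fun a b =>
  decidable_of_iff _ (SimpleGraph.fromRel_adj _ a b).symm

lemma fin2_eq_one {t : Fin 2} (h : t ≠ 0) : t = 1 := by omega

def wenc (a : Fin 3) (t : Fin 2) : Fin 7 := ⟨1 + 2 * a.val + t.val, by omega⟩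

lemma wenc_adj : ∀ a b t u, Wgraph.Adj (wenc a t) (wenc b u) ↔ a = b ∧ t ≠ u := by decide
lemma wenc_adj0 : ∀ a t, Wgraph.Adj 0 (wenc a t) := by decide
lemma wenc_ne0 : ∀ a t, wenc a t ≠ 0 := by decide

/-- no four pairwise nonadjacent distinct vertices in `A″`. -/
lemma ADP_indep3 {s : ℕ} (w : Fin 4 → Fin 2 ⊕ (Fin 2 × Fin 2 ⊕ Fin s))
    (hd : Function.Injective w)
    (hn : ∀ a b, a ≠ b → ¬ (ADoublePrime s).Adj (w a) (w b)) : False := by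
  have hinr : ∀ a, ∃ b, w a = inr b := by
    intro a
    rcases hw : w a with i | b
    · obtain ⟨c, hc⟩ : ∃ c, c ≠ a := by
        rcases eq_or_ne a 0 with rfl | h
        exacts [⟨1, by decide⟩, ⟨0, fun hh => h hh.symm⟩]
      exact absurd ((ADP_adj_l i (w c)).mpr
        (fun hh => hc (hd (hh.trans hw.symm)))) (by rw [← hw] at *; exact hn a c (Ne.symm hc))
    · exact ⟨b, rfl⟩
  choose b hb using hinr
  set lab : (Fin 2 × Fin 2 ⊕ Fin s) → Fin 3 :=
    Sum.elim (fun p => ⟨p.1.val, by omega⟩) (fun _ => 2) with hlab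
  have key : ∀ a c, a ≠ c → lab (b a) ≠ lab (b c) := by
    intro a c hac heq
    have hnadj : ¬ (ADoublePrime s).Adj (inr (b a)) (inr (b c)) := by
      rw [← hb, ← hb]; exact hn a c hac
    have hne : b a ≠ b c := by
      intro h
      exact hac (hd (by rw [hb, hb, h]))
    rcases hba : b a with ⟨j, t⟩ | p <;> rcases hbc : b c with ⟨k, u⟩ | q <;>
      rw [hba, hbc] at heq hnadj hne
    · have hjk : j = k := by
        have := congrArg Fin.val heq
        simp [hlab] at this
        exact Fin.ext this
      subst hjk
      rw [ADP_adj_kk] at hnadj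
      simp only [ne_eq, not_and, not_not] at hnadj
      exact hne (by rw [hnadj trivial])
    · have := congrArg Fin.val heq
      simp [hlab] at this
      omega
    · have := congrArg Fin.val heq
      simp [hlab] at this
      omega
    · rw [ADP_adj_cc] at hnadj
      exact hne (by rw [not_not.mp hnadj])
  have hinj : Function.Injective (fun a => lab (b a)) := by
    intro a c h
    by_contra hac
    exact key a c hac h
  have := Fintype.card_le_of_injective _ hinj
  simp at this

lemma classify_nohub {m₂ s : ℕ} {H₂ : SimpleGraph (Fin m₂)} (hc₂ : H₂.Connected)
    (e : H₂ ↪g APrime s) (h : ∀ v i, e v ≠ inl i) : Nonempty (H₂ ↪g Wgraph) := by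
  classical
  have hex : ∀ v, ∃ x, e v = inr x := by
    intro v
    rcases hev : e v with i | x
    · exact absurd hev (h v i)
    · exact ⟨x, rfl⟩
  choose P hP using hex
  have hadj : ∀ u v, H₂.Adj u v ↔ (P u).1 = (P v).1 ∧ (P u).2 ≠ (P v).2 := by
    intro u v
    rw [← Embedding.map_adj_iff (f := e), hP u, hP v, AP_adj_rr]
  have jconst : ∀ u v : Fin m₂, (P u).1 = (P v).1 := by
    have : ∀ u v : Fin m₂, H₂.Reachable u v → (P u).1 = (P v).1 := by
      intro u v hr
      obtain ⟨w⟩ := hr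
      induction w with
      | nil => rfl
      | cons hadj' w ih => exact (((hadj _ _).mp hadj').1).trans ih
    exact fun u v => this u v (hc₂.preconnected u v)
  set F : Fin m₂ → Fin 7 := fun v => if (P v).2 = 0 then wenc 0 0 else wenc 0 1 with hF
  have hFinj : Function.Injective F := by
    intro u v huv
    have ht : (P u).2 = (P v).2 := by
      by_cases h1 : (P u).2 = 0 <;> by_cases h2 : (P v).2 = 0 <;>
        simp only [hF, h1, h2, if_true, if_false, if_pos, if_neg] at huv ⊢ <;>
        first
        | (rw [h1, h2])
        | (exact absurd huv (by decide))
        | (rw [fin2_eq_one h1, fin2_eq_one h2])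
    have : e u = e v := by rw [hP u, hP v, Prod.ext_iff.mpr ⟨jconst u v, ht⟩]
    exact e.injective this
  refine ⟨⟨⟨F, hFinj⟩, ?_⟩⟩
  intro u v
  show Wgraph.Adj (F u) (F v) ↔ H₂.Adj u v
  rw [hadj]
  have hj := jconst u v
  by_cases h1 : (P u).2 = 0 <;> by_cases h2 : (P v).2 = 0 <;>
    simp only [hF, h1, h2, if_true, if_false, if_pos, if_neg] <;>
    rw [wenc_adj]
  · simp [hj, h1, h2]
  · simp [hj, h1, fin2_eq_one h2]
  · simp [hj, h2, fin2_eq_one h1]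
  · simp [hj, fin2_eq_one h1, fin2_eq_one h2]

lemma wenc_inj : ∀ a b t u, wenc a t = wenc b u ↔ a = b ∧ t = u := by decide

lemma classify_onehub {m₂ s : ℕ} (hs : 1 ≤ s) {H₂ : SimpleGraph (Fin m₂)}
    (e : H₂ ↪g APrime s) (e' : H₂ ↪g ADoublePrime s)
    (h : Fin m₂) (i : Fin 2) (hh : e h = inl i)
    (honly : ∀ v j, e v = inl j → v = h) : Nonempty (H₂ ↪g Wgraph) := by
  classical
  set P : Fin m₂ → Fin s × Fin 2 :=
    fun v => Sum.elim (fun _ => ((⟨0, hs⟩ : Fin s), (0 : Fin 2))) id (e v) with hPdef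
  have hP : ∀ v, v ≠ h → e v = inr (P v) := by
    intro v hv
    rcases hev : e v with j | x
    · exact absurd (honly v j hev) hv
    · simp [hPdef, hev]
  have hub : ∀ v, v ≠ h → H₂.Adj h v := by
    intro v hv
    rw [← Embedding.map_adj_iff (f := e), hh, hP v hv]
    exact AP_adj_lr i _
  have restadj : ∀ u v, u ≠ h → v ≠ h →
      (H₂.Adj u v ↔ (P u).1 = (P v).1 ∧ (P u).2 ≠ (P v).2) := by
    intro u v hu hv
    rw [← Embedding.map_adj_iff (f := e), hP u hu, hP v hv, AP_adj_rr]
  set J : Finset (Fin s) :=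
    (Finset.univ.filter (fun v => v ≠ h)).image (fun v => (P v).1) with hJdef
  have hJm : ∀ v, v ≠ h → (P v).1 ∈ J := by
    intro v hv
    exact Finset.mem_image.mpr ⟨v, Finset.mem_filter.mpr ⟨Finset.mem_univ _, hv⟩, rfl⟩
  have hJ3 : J.card ≤ 3 := by
    by_contra hc
    obtain ⟨t, htJ, ht4⟩ := Finset.exists_subset_card_eq (show 4 ≤ J.card by omega)
    have : Nonempty (Fin 4 ↪ ↑t) := by
      rw [Function.Embedding.nonempty_iff_card_le, Fintype.card_coe, ht4]
      simp
    obtain ⟨ef⟩ := this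
    set jf : Fin 4 → Fin s := fun a => (ef a).val with hjf
    have hjfinj : Function.Injective jf := fun a b hab => ef.injective (Subtype.ext hab)
    have hjfJ : ∀ a, jf a ∈ J := fun a => htJ (ef a).2
    have hexv : ∀ a, ∃ u, u ≠ h ∧ (P u).1 = jf a := by
      intro a
      obtain ⟨u, hu, hPu⟩ := Finset.mem_image.mp (hjfJ a)
      exact ⟨u, (Finset.mem_filter.mp hu).2, hPu⟩
    choose vf hvfh hvfP using hexv
    apply ADP_indep3 (fun a => e' (vf a))
    · intro a b hab
      have : vf a = vf b := e'.injective hab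
      exact hjfinj (by rw [← hvfP a, ← hvfP b, this])
    · intro a b hab hadj
      rw [Embedding.map_adj_iff] at hadj
      have := ((restadj _ _ (hvfh a) (hvfh b)).mp hadj).1
      rw [hvfP a, hvfP b] at this
      exact hab (hjfinj this)
  have : Nonempty (↑J ↪ Fin 3) := by
    rw [Function.Embedding.nonempty_iff_card_le, Fintype.card_coe]
    simpa using hJ3
  obtain ⟨ι⟩ := this
  set ι' : Fin s → Fin 3 := fun j => if hj : j ∈ J then ι ⟨j, hj⟩ else 0 with hι'def
  have hι' : ∀ j₁ ∈ J, ∀ j₂ ∈ J, ι' j₁ = ι' j₂ → j₁ = j₂ := by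
    intro j₁ h₁ j₂ h₂ heq
    simp only [hι'def, dif_pos h₁, dif_pos h₂] at heq
    exact Subtype.ext_iff.mp (ι.injective heq)
  set F : Fin m₂ → Fin 7 :=
    fun v => if v = h then 0 else wenc (ι' (P v).1) (P v).2 with hFdef
  have hFinj : Function.Injective F := by
    intro u v huv
    by_cases hu : u = h <;> by_cases hv : v = h <;>
      simp only [hFdef, hu, hv, if_true, if_false, if_pos, if_neg] at huv
    · rw [hu, hv]
    · exact absurd huv.symm (wenc_ne0 _ _)
    · exact absurd huv (wenc_ne0 _ _)
    · rw [wenc_inj] at huv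
      have hj : (P u).1 = (P v).1 := hι' _ (hJm u hu) _ (hJm v hv) huv.1
      have : e u = e v := by
        rw [hP u hu, hP v hv, Prod.ext_iff.mpr ⟨hj, huv.2⟩]
      exact e.injective this
  refine ⟨⟨⟨F, hFinj⟩, ?_⟩⟩
  intro u v
  show Wgraph.Adj (F u) (F v) ↔ H₂.Adj u v
  by_cases hu : u = h <;> by_cases hv : v = h <;>
    simp only [hFdef, hu, hv, if_true, if_false, if_pos, if_neg]
  · exact iff_of_false (by decide) (by simp)
  · exact iff_of_true (wenc_adj0 _ _) (hub v hv)
  · exact iff_of_true (wenc_adj0 _ _).symm (hub u hu).symm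
  · rw [wenc_adj, restadj u v hu hv]
    constructor
    · rintro ⟨h1, h2⟩
      exact ⟨hι' _ (hJm u hu) _ (hJm v hv) h1, h2⟩
    · rintro ⟨h1, h2⟩
      exact ⟨by rw [h1], h2⟩

lemma classify_twohub {m₂ s : ℕ} (hs : 1 ≤ s) {H₂ : SimpleGraph (Fin m₂)}
    (hc₂ : H₂.Connected) (e : H₂ ↪g APrime s) (e' : H₂ ↪g ADoublePrime s)
    (h₀ h₁ : Fin m₂) (hh₀ : e h₀ = inl 0) (hh₁ : e h₁ = inl 1) :
    Nonempty (H₂ ↪g Wgraph) ∨ Nonempty (H₂ ≃g K4minusGraph) := by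
  classical
  have hne : h₀ ≠ h₁ := by
    intro h
    rw [h, hh₁] at hh₀
    simp at hh₀
  have nadj01 : ¬ H₂.Adj h₀ h₁ := by
    rw [← Embedding.map_adj_iff (f := e), hh₀, hh₁]
    exact AP_adj_ll 0 1
  have honly : ∀ v j, e v = inl j → v = h₀ ∨ v = h₁ := by
    intro v j hv
    fin_cases j
    · exact Or.inl (e.injective (hv.trans hh₀.symm))
    · exact Or.inr (e.injective (hv.trans hh₁.symm))
  have hub : ∀ v, v ≠ h₀ → v ≠ h₁ → H₂.Adj h₀ v ∧ H₂.Adj h₁ v := by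
    intro v hv0 hv1
    rcases hev : e v with j | x
    · rcases honly v j hev with h | h
      exacts [absurd h hv0, absurd h hv1]
    · constructor
      · rw [← Embedding.map_adj_iff (f := e), hh₀, hev]; exact AP_adj_lr 0 x
      · rw [← Embedding.map_adj_iff (f := e), hh₁, hev]; exact AP_adj_lr 1 x
  -- images of the two hubs under e' are in the inr part
  have hb : ∀ (g₀ g₁ : Fin m₂), g₀ ≠ g₁ → ¬H₂.Adj g₀ g₁ → ∃ b, e' g₀ = inr b := by
    intro g₀ g₁ hg hna
    rcases heg : e' g₀ with j | b
    · exfalso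
      apply hna
      rw [← Embedding.map_adj_iff (f := e'), heg, ADP_adj_l]
      intro hh
      exact hg (e'.injective (heg.trans hh.symm))
    · exact ⟨b, rfl⟩
  obtain ⟨b₀, hb₀⟩ := hb h₀ h₁ hne nadj01
  obtain ⟨b₁, hb₁⟩ := hb h₁ h₀ (Ne.symm hne) (fun hh => nadj01 hh.symm)
  have bne : b₀ ≠ b₁ := by
    intro h
    exact hne (e'.injective (by rw [hb₀, hb₁, h]))
  have nadjb : ¬ (ADoublePrime s).Adj (inr b₀) (inr b₁) := by
    rw [← hb₀, ← hb₁, Embedding.map_adj_iff]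
    exact nadj01
  -- every rest vertex maps under e' to a hub of A″
  have resthub : ∀ v, v ≠ h₀ → v ≠ h₁ → ∃ i, e' v = inl i := by
    intro v hv0 hv1
    rcases hev : e' v with j | c
    · exact ⟨j, rfl⟩
    exfalso
    obtain ⟨ha0, ha1⟩ := hub v hv0 hv1
    have hc0 : (ADoublePrime s).Adj (inr c) (inr b₀) := by
      rw [← hev, ← hb₀, Embedding.map_adj_iff]; exact ha0.symm
    have hc1 : (ADoublePrime s).Adj (inr c) (inr b₁) := by
      rw [← hev, ← hb₁, Embedding.map_adj_iff]; exact ha1.symm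
    rcases c with ⟨j, t⟩ | p
    · rcases hbb0 : b₀ with ⟨k₀, u₀⟩ | q₀
      · rcases hbb1 : b₁ with ⟨k₁, u₁⟩ | q₁
        · rw [hbb0] at hc0; rw [hbb1] at hc1
          rw [ADP_adj_kk] at hc0 hc1
          apply bne
          rw [hbb0, hbb1]
          obtain ⟨e0, d0⟩ := hc0
          obtain ⟨e1, d1⟩ := hc1
          have e0' : j = k₀ := e0
          have e1' : j = k₁ := e1
          have d0' : t ≠ u₀ := d0
          have d1' : t ≠ u₁ := d1
          exact congrArg _ (Prod.ext_iff.mpr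
            ⟨by rw [← e0', ← e1'], by omega⟩)
        · rw [hbb1] at hc1
          exact ADP_adj_kc _ _ hc1
      · rw [hbb0] at hc0
        exact ADP_adj_kc _ _ hc0
    · rcases hbb0 : b₀ with ⟨k₀, u₀⟩ | q₀
      · rw [hbb0] at hc0
        exact ADP_adj_ck _ _ hc0
      rcases hbb1 : b₁ with ⟨k₁, u₁⟩ | q₁
      · rw [hbb1] at hc1
        exact ADP_adj_ck _ _ hc1
      apply nadjb
      rw [hbb0, hbb1, ADP_adj_cc]
      intro hq
      apply bne
      rw [hbb0, hbb1, hq]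
  by_cases hr : ∃ u, u ≠ h₀ ∧ u ≠ h₁
  · obtain ⟨u, hu0, hu1⟩ := hr
    by_cases hr2 : ∃ v, v ≠ h₀ ∧ v ≠ h₁ ∧ v ≠ u
    · -- K₄⁻ case
      obtain ⟨v, hv0, hv1, hvu⟩ := hr2
      obtain ⟨iu, hiu⟩ := resthub u hu0 hu1
      obtain ⟨iv, hiv⟩ := resthub v hv0 hv1
      have hiuv : iu ≠ iv := by
        intro h
        exact hvu (e'.injective (by rw [hiu, hiv, h])).symm
      have adjuv : H₂.Adj u v := by
        rw [← Embedding.map_adj_iff (f := e'), hiu, hiv, ADP_adj_l]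
        intro h
        exact hiuv (by injection h with h; exact h.symm) |>.elim
      have hall : ∀ x, x = h₀ ∨ x = h₁ ∨ x = u ∨ x = v := by
        intro x
        by_contra hx
        push_neg at hx
        obtain ⟨hx0, hx1, hxu, hxv⟩ := hx
        obtain ⟨ix, hix⟩ := resthub x hx0 hx1
        have d1 : ix ≠ iu := fun h => hxu (e'.injective (by rw [hix, hiu, h]))
        have d2 : ix ≠ iv := fun h => hxv (e'.injective (by rw [hix, hiv, h]))
        fin_cases ix <;> fin_cases iu <;> fin_cases iv <;> simp_all
      right
      set G : Fin 4 → Fin m₂ := ![u, v, h₀, h₁] with hG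
      have hGinj : Function.Injective G := by
        have g0 : G 0 = u := rfl
        have g1 : G 1 = v := rfl
        have g2 : G 2 = h₀ := rfl
        have g3 : G 3 = h₁ := rfl
        intro a b hab
        fin_cases a <;> fin_cases b <;>
          simp only [g0, g1, g2, g3] at hab <;> simp_all
      have hGsurj : Function.Surjective G := by
        intro x
        rcases hall x with rfl | rfl | rfl | rfl
        exacts [⟨2, rfl⟩, ⟨3, rfl⟩, ⟨0, rfl⟩, ⟨1, rfl⟩]
      have hadjs : H₂.Adj u h₀ := (hub u hu0 hu1).1.symm
      have hadjs1 : H₂.Adj u h₁ := (hub u hu0 hu1).2.symm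
      have hadjs2 : H₂.Adj v h₀ := (hub v hv0 hv1).1.symm
      have hadjs3 : H₂.Adj v h₁ := (hub v hv0 hv1).2.symm
      have hiff : ∀ a b : Fin 4, H₂.Adj (G a) (G b) ↔ K4minusGraph.Adj a b := by
        intro a b
        fin_cases a <;> fin_cases b
        · exact iff_of_false (H₂.irrefl) (by decide)
        · exact iff_of_true adjuv (by decide)
        · exact iff_of_true hadjs (by decide)
        · exact iff_of_true hadjs1 (by decide)
        · exact iff_of_true adjuv.symm (by decide)
        · exact iff_of_false (H₂.irrefl) (by decide)
        · exact iff_of_true hadjs2 (by decide)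
        · exact iff_of_true hadjs3 (by decide)
        · exact iff_of_true hadjs.symm (by decide)
        · exact iff_of_true hadjs2.symm (by decide)
        · exact iff_of_false (H₂.irrefl) (by decide)
        · exact iff_of_false nadj01 (by decide)
        · exact iff_of_true hadjs1.symm (by decide)
        · exact iff_of_true hadjs3.symm (by decide)
        · exact iff_of_false (fun hh => nadj01 hh.symm) (by decide)
        · exact iff_of_false (H₂.irrefl) (by decide)
      exact ⟨(RelIso.mk (Equiv.ofBijective G ⟨hGinj, hGsurj⟩)
        (fun {a b} => hiff a b) : K4minusGraph ≃g H₂).symm⟩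
    · -- P₃ case
      push_neg at hr2
      have hall : ∀ x, x = h₀ ∨ x = h₁ ∨ x = u := by
        intro x
        by_contra hx
        push_neg at hx
        exact hx.2.2 (hr2 x hx.1 hx.2.1)
      left
      set F : Fin m₂ → Fin 7 := fun v => if v = h₀ then 1 else if v = h₁ then 3 else 0
        with hF
      have F0 : F h₀ = 1 := by simp [hF]
      have F1 : F h₁ = 3 := by simp [hF, Ne.symm hne]
      have Fu : F u = 0 := by simp [hF, hu0, hu1]
      have hadjs : H₂.Adj h₀ u := (hub u hu0 hu1).1
      have hadjs1 : H₂.Adj h₁ u := (hub u hu0 hu1).2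
      have hFinj : Function.Injective F := by
        intro x y hxy
        rcases hall x with rfl | rfl | rfl <;> rcases hall y with rfl | rfl | rfl <;>
          simp only [F0, F1, Fu] at hxy <;>
          first
          | rfl
          | exact absurd hxy (by decide)
      refine ⟨⟨⟨F, hFinj⟩, ?_⟩⟩
      intro x y
      show Wgraph.Adj (F x) (F y) ↔ H₂.Adj x y
      rcases hall x with rfl | rfl | rfl <;> rcases hall y with rfl | rfl | rfl
      · exact iff_of_false (by rw [F0]; decide) (H₂.irrefl)
      · exact iff_of_false (by rw [F0, F1]; decide) nadj01
      · exact iff_of_true (by rw [F0, Fu]; decide) hadjs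
      · exact iff_of_false (by rw [F1, F0]; decide) (fun hh => nadj01 hh.symm)
      · exact iff_of_false (by rw [F1]; decide) (H₂.irrefl)
      · exact iff_of_true (by rw [F1, Fu]; decide) hadjs1
      · exact iff_of_true (by rw [Fu, F0]; decide) hadjs.symm
      · exact iff_of_true (by rw [Fu, F1]; decide) hadjs1.symm
      · exact iff_of_false (by rw [Fu]; decide) (H₂.irrefl)
  · -- no rest vertex: contradiction with connectivity
    exfalso
    push_neg at hr
    obtain ⟨w⟩ := hc₂.preconnected h₀ h₁
    cases w with
    | nil => exact hne rfl
    | cons ha q =>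
      rename_i x
      rcases eq_or_ne x h₀ with rfl | hx0
      · exact H₂.irrefl ha
      · have : x = h₁ := hr x hx0
        rw [this] at ha
        exact nadj01 ha

lemma classify {m₂ s : ℕ} (hs : 1 ≤ s) {H₂ : SimpleGraph (Fin m₂)} (hc₂ : H₂.Connected)
    (e : H₂ ↪g APrime s) (e' : H₂ ↪g ADoublePrime s) :
    Nonempty (H₂ ↪g Wgraph) ∨ Nonempty (H₂ ≃g K4minusGraph) := by
  classical
  by_cases h0 : ∃ v, e v = Sum.inl 0
  · by_cases h1 : ∃ v, e v = Sum.inl 1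
    · obtain ⟨a, ha⟩ := h0
      obtain ⟨b, hb⟩ := h1
      exact classify_twohub hs hc₂ e e' a b ha hb
    · obtain ⟨a, ha⟩ := h0
      refine Or.inl (classify_onehub hs e e' a 0 ha ?_)
      intro v j hv
      fin_cases j
      · exact e.injective (hv.trans ha.symm)
      · exact absurd ⟨v, hv⟩ h1
  · by_cases h1 : ∃ v, e v = Sum.inl 1
    · obtain ⟨b, hb⟩ := h1
      refine Or.inl (classify_onehub hs e e' b 1 hb ?_)
      intro v j hv
      fin_cases j
      · exact absurd ⟨v, hv⟩ h0
      · exact e.injective (hv.trans hb.symm)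
    · refine Or.inl (classify_nohub hc₂ e ?_)
      intro v i hv
      fin_cases i
      exacts [h0 ⟨v, hv⟩, h1 ⟨v, hv⟩]

end Aux

/-- If `{H₁, H₂}` is a forbidden pair forcing dominating cycles in all large 2-connected
graphs, and `H₁` has diameter at least 3, then `H₂` is an induced subgraph of
`K₁ + 3K₂` or is isomorphic to `K₄` minus an edge. -/
theorem stmt17 (m₁ m₂ : ℕ) (H₁ : SimpleGraph (Fin m₁)) (H₂ : SimpleGraph (Fin m₂))
    (hc₁ : H₁.Connected) (hc₂ : H₂.Connected) (n₀ : ℕ)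
    (hdom : ∀ (W : Type) [Fintype W] [DecidableEq W] (G : SimpleGraph W),
        TwoConnected G → n₀ ≤ Fintype.card W →
        ¬ Nonempty (H₁ ↪g G) → ¬ Nonempty (H₂ ↪g G) →
        ∃ (n : ℕ) (f : ZMod n → W), IsDominatingCycle G n f)
    (hdiam : ∃ a b : Fin m₁, 3 ≤ H₁.dist a b) :
    Nonempty (H₂ ↪g Wgraph) ∨ Nonempty (H₂ ≃g K4minusGraph) := by
  classical
  obtain ⟨v0, v1, v2, v3, h01, h12, h23, n02, n03, n13, d02, d03, d13⟩ :=
    exists_P4 H₁ hc₁ hdiam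
  set s := max 3 n₀ with hsdef
  have hs3 : 3 ≤ s := le_max_left _ _
  have hsn : n₀ ≤ s := le_max_right _ _
  have hH1A : ¬ Nonempty (H₁ ↪g APrime s) := by
    rintro ⟨f⟩
    exact AP_noP4 (f.map_adj_iff.mpr h01) (f.map_adj_iff.mpr h12)
      (f.map_adj_iff.mpr h23)
      (fun h => n02 (f.map_adj_iff.mp h)) (fun h => n03 (f.map_adj_iff.mp h))
      (fun h => n13 (f.map_adj_iff.mp h)) (fun h => d02 (f.injective h))
  have hH1A2 : ¬ Nonempty (H₁ ↪g ADoublePrime s) := by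
    rintro ⟨f⟩
    exact ADP_noP4 (f.map_adj_iff.mpr h01) (f.map_adj_iff.mpr h12)
      (f.map_adj_iff.mpr h23)
      (fun h => n02 (f.map_adj_iff.mp h))
      (fun h => n03 (f.map_adj_iff.mp h)) (fun h => n13 (f.map_adj_iff.mp h))
      (fun h => d03 (f.injective h)) (fun h => d13 (f.injective h))
  have hH2A : Nonempty (H₂ ↪g APrime s) := by
    by_contra hA
    obtain ⟨n, f, hf⟩ := hdom _ (APrime s) (AP_twoConnected (by omega))
      (by
        simp only [Fintype.card_sum, Fintype.card_prod, Fintype.card_fin]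
        omega)
      hH1A hA
    exact AP_noDom hs3 f hf
  have hH2A2 : Nonempty (H₂ ↪g ADoublePrime s) := by
    by_contra hA
    obtain ⟨n, f, hf⟩ := hdom _ (ADoublePrime s) ADP_twoConnected
      (by
        simp only [Fintype.card_sum, Fintype.card_prod, Fintype.card_fin]
        omega)
      hH1A2 hA
    exact ADP_noDom (by omega) f hf
  obtain ⟨e⟩ := hH2A
  obtain ⟨e'⟩ := hH2A2
  exact classify (by omega) hc₂ e e'
end
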